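/- arXiv:2002.10099 — 7 statements merged into one kernel-verified Lean document; each statement's English description precedes it below -/
import Mathlib

section
/- If q ∈ ℝᵈ with q ≠ 0 is a critical point of ℓ, i.e. ∇ℓ(q) = 0, then there exists an index j ∈ {1, …, d} with λ_j < 2λ such that Dq = λ_j q and ‖q‖² = 1 − λ_j/(2λ). -/
lemma stmt2_deriv (d : ℕ) (Λ : Fin d → ℝ) (lam : ℝ) (q : EuclideanSpace ℝ (Fin d)) :
    HasFDerivAt (fun p : EuclideanSpace ℝ (Fin d) => ∑ i, Λ i * p i ^ 2 + lam * (‖p‖ ^ 2 - 1) ^ 2)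
      ((∑ i, (Λ i * (2 * q i)) • (EuclideanSpace.proj i : EuclideanSpace ℝ (Fin d) →L[ℝ] ℝ))
        + (lam * (2 * (‖q‖ ^ 2 - 1))) • ((innerSL ℝ q : EuclideanSpace ℝ (Fin d) →L[ℝ] ℝ) + (innerSL ℝ q))) q := by
  have h1 : ∀ i : Fin d, HasFDerivAt (fun p : EuclideanSpace ℝ (Fin d) => Λ i * p i ^ 2)
      ((Λ i * (2 * q i)) • (EuclideanSpace.proj i : EuclideanSpace ℝ (Fin d) →L[ℝ] ℝ)) q := by
    intro i
    have hp := (EuclideanSpace.proj i (𝕜 := ℝ)).hasFDerivAt (x := q)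
    have h := (hp.mul hp).const_mul (Λ i)
    have heq : (fun p : EuclideanSpace ℝ (Fin d) => Λ i * p i ^ 2)
        = fun p : EuclideanSpace ℝ (Fin d) => Λ i * (p i * p i) := by
      funext p; ring
    rw [heq]
    simp only [PiLp.proj_apply] at h
    refine h.congr_fderiv ?_
    module
  have h2 : HasFDerivAt (fun p : EuclideanSpace ℝ (Fin d) => ‖p‖ ^ 2)
      ((innerSL ℝ q : EuclideanSpace ℝ (Fin d) →L[ℝ] ℝ) + (innerSL ℝ q)) q := by
    have h := (hasFDerivAt_id (𝕜 := ℝ) q).inner ℝ (hasFDerivAt_id (𝕜 := ℝ) q)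
    have heq : (fun p : EuclideanSpace ℝ (Fin d) => ‖p‖ ^ 2)
        = fun p : EuclideanSpace ℝ (Fin d) => (inner (𝕜 := ℝ) p p : ℝ) := by
      funext p; rw [real_inner_self_eq_norm_sq]
    rw [heq]
    refine h.congr_fderiv ?_
    ext y
    simp [real_inner_comm]
  have h3 : HasFDerivAt (fun p : EuclideanSpace ℝ (Fin d) => lam * (‖p‖ ^ 2 - 1) ^ 2)
      ((lam * (2 * (‖q‖ ^ 2 - 1))) • ((innerSL ℝ q : EuclideanSpace ℝ (Fin d) →L[ℝ] ℝ) + (innerSL ℝ q))) q := by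
    have hs := h2.sub_const 1
    have h := (hs.mul hs).const_mul lam
    have heq : (fun p : EuclideanSpace ℝ (Fin d) => lam * (‖p‖ ^ 2 - 1) ^ 2)
        = fun p : EuclideanSpace ℝ (Fin d) => lam * ((‖p‖ ^ 2 - 1) * (‖p‖ ^ 2 - 1)) := by
      funext p; ring
    rw [heq]
    refine h.congr_fderiv ?_
    module
  exact (HasFDerivAt.fun_sum fun i _ => h1 i).add h3

/-- If `q ≠ 0` is a critical point of `ℓ(q) = qᵀDq + λ(‖q‖² − 1)²`, then there is
an index `j` with `λ_j < 2λ`, `Dq = λ_j q` and `‖q‖² = 1 − λ_j/(2λ)`. -/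
theorem stmt2 (d : ℕ) (hd : 0 < d) (Λ : Fin d → ℝ) (hΛ0 : 0 ≤ Λ ⟨0, hd⟩)
    (hΛmono : Monotone Λ) (lam : ℝ) (hlam : 0 < lam)
    (ℓ : EuclideanSpace ℝ (Fin d) → ℝ)
    (hℓ : ∀ q : EuclideanSpace ℝ (Fin d),
      ℓ q = ∑ i, Λ i * q i ^ 2 + lam * (‖q‖ ^ 2 - 1) ^ 2)
    (q : EuclideanSpace ℝ (Fin d)) (hq : q ≠ 0) (hcrit : gradient ℓ q = 0) :
    ∃ j : Fin d, Λ j < 2 * lam ∧ (∀ i : Fin d, Λ i * q i = Λ j * q i) ∧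
      ‖q‖ ^ 2 = 1 - Λ j / (2 * lam) := by
  have hℓeq : ℓ = fun p : EuclideanSpace ℝ (Fin d) =>
      ∑ i, Λ i * p i ^ 2 + lam * (‖p‖ ^ 2 - 1) ^ 2 := funext hℓ
  subst hℓeq
  have H := stmt2_deriv d Λ lam q
  have hfd : fderiv ℝ (fun p : EuclideanSpace ℝ (Fin d) =>
      ∑ i, Λ i * p i ^ 2 + lam * (‖p‖ ^ 2 - 1) ^ 2) q = 0 := by
    have : (InnerProductSpace.toDual ℝ (EuclideanSpace ℝ (Fin d))).symm
        (fderiv ℝ (fun p : EuclideanSpace ℝ (Fin d) =>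
          ∑ i, Λ i * p i ^ 2 + lam * (‖p‖ ^ 2 - 1) ^ 2) q) = 0 := hcrit
    have := congrArg (InnerProductSpace.toDual ℝ (EuclideanSpace ℝ (Fin d))) this
    simpa using this
  have hL0 : ((∑ i, (Λ i * (2 * q i)) • (EuclideanSpace.proj i : EuclideanSpace ℝ (Fin d) →L[ℝ] ℝ))
        + (lam * (2 * (‖q‖ ^ 2 - 1))) • ((innerSL ℝ q : EuclideanSpace ℝ (Fin d) →L[ℝ] ℝ) + (innerSL ℝ q)))
      = 0 := by rw [← H.fderiv, hfd]
  -- componentwise equation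
  have key : ∀ i : Fin d, (Λ i + 2 * lam * (‖q‖ ^ 2 - 1)) * q i = 0 := by
    intro i
    have := ContinuousLinearMap.ext_iff.1 hL0 (EuclideanSpace.single i 1)
    simp only [ContinuousLinearMap.add_apply, ContinuousLinearMap.coe_sum',
      Finset.sum_apply, ContinuousLinearMap.coe_smul', Pi.smul_apply,
      PiLp.proj_apply, EuclideanSpace.single_apply, innerSL_apply_apply,
      ContinuousLinearMap.zero_apply, smul_eq_mul, Pi.zero_apply] at this
    rw [Finset.sum_eq_single i (fun k _ hk => by simp [if_neg hk])
      (fun h => absurd (Finset.mem_univ i) h)] at this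
    have hinner : (inner ℝ q (EuclideanSpace.single i 1) : ℝ) = q i := by
      rw [EuclideanSpace.inner_single_right]; simp
    rw [hinner] at this
    norm_num at this
    nlinarith [this]
  obtain ⟨j, hj⟩ : ∃ j : Fin d, q j ≠ 0 := by
    by_contra h
    push_neg at h
    exact hq (by ext i; simpa using h i)
  have hΛj : Λ j = 2 * lam * (1 - ‖q‖ ^ 2) := by
    have := key j
    rcases mul_eq_zero.1 this with h | h
    · linarith
    · exact absurd h hj
  have hnorm : 0 < ‖q‖ ^ 2 := by
    have : ‖q‖ ≠ 0 := norm_ne_zero_iff.2 hq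
    positivity
  refine ⟨j, ?_, ?_, ?_⟩
  · nlinarith
  · intro i
    rcases eq_or_ne (q i) 0 with h | h
    · simp [h]
    · have := key i
      rcases mul_eq_zero.1 this with h' | h'
      · have : Λ i = 2 * lam * (1 - ‖q‖ ^ 2) := by linarith
        rw [this, hΛj]
      · exact absurd h' h
  · rw [hΛj]
    field_simp
    ring
end

section
/- Assume additionally that the eigenvalues are pairwise distinct, i.e. λ₁ < λ₂ < … < λ_d. Then the set of critical points of ℓ is exactly {0} ∪ {±√(1 − λ_j/(2λ)) e_j : j ∈ {1, …, d} with λ_j < 2λ}. In particular, ℓ has at most 2d + 1 critical points, and if λ > λ₁/2 then ℓ has at least 3 critical points. -/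
open InnerProductSpace

theorem gradAux (d : ℕ) (Λ : Fin d → ℝ) (lam : ℝ) (ℓ : EuclideanSpace ℝ (Fin d) → ℝ)
    (hℓ : ∀ q : EuclideanSpace ℝ (Fin d),
      ℓ q = ∑ i, Λ i * q i ^ 2 + lam * (‖q‖ ^ 2 - 1) ^ 2)
    (q : EuclideanSpace ℝ (Fin d)) :
    HasGradientAt ℓ
      (WithLp.toLp 2 (fun i => (2 * Λ i + 4 * lam * (‖q‖ ^ 2 - 1)) * q i : Fin d → ℝ) :
        EuclideanSpace ℝ (Fin d)) q := by
  have hnorm : ∀ p : EuclideanSpace ℝ (Fin d), ‖p‖ ^ 2 = ∑ i, p i ^ 2 := by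
    intro p
    rw [EuclideanSpace.norm_eq, Real.sq_sqrt (by positivity)]
    simp [sq_abs]
  have hℓ' : ℓ = fun p : EuclideanSpace ℝ (Fin d) =>
      ∑ i, Λ i * p i ^ 2 + lam * (((∑ i, p i ^ 2) - 1) * ((∑ i, p i ^ 2) - 1)) := by
    funext p; rw [hℓ p, hnorm p]; ring
  rw [hasGradientAt_iff_hasFDerivAt]
  set P : Fin d → EuclideanSpace ℝ (Fin d) →L[ℝ] ℝ := fun i => EuclideanSpace.proj i with hP
  have hPapp : ∀ (i : Fin d) (v : EuclideanSpace ℝ (Fin d)), P i v = v i := fun _ _ => rfl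
  have hproj : ∀ i : Fin d, HasFDerivAt (fun p : EuclideanSpace ℝ (Fin d) => p i) (P i) q :=
    fun i => (P i).hasFDerivAt
  have hsq : ∀ i : Fin d, HasFDerivAt (fun p : EuclideanSpace ℝ (Fin d) => p i ^ 2)
      ((2 * q i) • P i) q := by
    intro i
    have := (hproj i).fun_mul (hproj i)
    simpa [sq, two_mul, add_smul] using this
  have hA : HasFDerivAt (fun p : EuclideanSpace ℝ (Fin d) => ∑ i, Λ i * p i ^ 2)
      (∑ i, (Λ i * (2 * q i)) • P i) q := by
    refine HasFDerivAt.fun_sum fun i _ => ?_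
    simpa [smul_smul] using (hsq i).const_mul (Λ i)
  have hN : HasFDerivAt (fun p : EuclideanSpace ℝ (Fin d) => ∑ i, p i ^ 2)
      (∑ i, (2 * q i) • P i) q :=
    HasFDerivAt.fun_sum fun i _ => hsq i
  have h1 := hN.sub_const 1
  have hB := (h1.mul h1).const_mul lam
  have hD := hA.add hB
  rw [hℓ']
  have hEq : (toDual ℝ (EuclideanSpace ℝ (Fin d)))
      (WithLp.toLp 2 (fun i => (2 * Λ i + 4 * lam * (‖q‖ ^ 2 - 1)) * q i : Fin d → ℝ) :
        EuclideanSpace ℝ (Fin d)) =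
      ∑ i, (Λ i * (2 * q i)) • P i +
        lam • (((∑ i, q i ^ 2) - 1) • ∑ i, (2 * q i) • P i +
          ((∑ i, q i ^ 2) - 1) • ∑ i, (2 * q i) • P i) := by
    ext v
    simp only [toDual_apply_apply, PiLp.inner_apply, PiLp.toLp_apply, RCLike.inner_apply, starRingEnd_apply,
      star_trivial, ContinuousLinearMap.add_apply, ContinuousLinearMap.sum_apply,
      ContinuousLinearMap.smul_apply, hPapp, smul_eq_mul, Finset.mul_sum,
      Finset.sum_mul, hnorm q]
    rw [mul_add, Finset.mul_sum, ← Finset.sum_add_distrib, ← Finset.sum_add_distrib]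
    refine Finset.sum_congr rfl fun i _ => ?_
    ring
  rw [hEq]
  exact hD

/-- With pairwise distinct eigenvalues `λ₁ < … < λ_d`, the set of critical points
of `ℓ` is exactly `{0} ∪ {±√(1 − λ_j/(2λ)) e_j : λ_j < 2λ}`; in particular there are at most
`2d + 1` critical points, and at least `3` when `λ > λ₁/2`. -/
theorem stmt3 (d : ℕ) (hd : 0 < d) (Λ : Fin d → ℝ) (hΛ0 : 0 ≤ Λ ⟨0, hd⟩)
    (hΛ : StrictMono Λ) (lam : ℝ) (hlam : 0 < lam)
    (ℓ : EuclideanSpace ℝ (Fin d) → ℝ)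
    (hℓ : ∀ q : EuclideanSpace ℝ (Fin d),
      ℓ q = ∑ i, Λ i * q i ^ 2 + lam * (‖q‖ ^ 2 - 1) ^ 2) :
    {q : EuclideanSpace ℝ (Fin d) | gradient ℓ q = 0} =
      insert 0 {q : EuclideanSpace ℝ (Fin d) | ∃ j : Fin d, Λ j < 2 * lam ∧
        (q = Real.sqrt (1 - Λ j / (2 * lam)) • EuclideanSpace.single j (1 : ℝ) ∨
         q = -(Real.sqrt (1 - Λ j / (2 * lam)) • EuclideanSpace.single j (1 : ℝ)))} ∧
    {q : EuclideanSpace ℝ (Fin d) | gradient ℓ q = 0}.ncard ≤ 2 * d + 1 ∧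
    (Λ ⟨0, hd⟩ / 2 < lam →
      3 ≤ {q : EuclideanSpace ℝ (Fin d) | gradient ℓ q = 0}.ncard) := by
  classical
  have hnorm : ∀ p : EuclideanSpace ℝ (Fin d), ‖p‖ ^ 2 = ∑ i, p i ^ 2 := by
    intro p
    rw [EuclideanSpace.norm_eq, Real.sq_sqrt (by positivity)]
    simp [sq_abs]
  set c : Fin d → ℝ := fun j => 1 - Λ j / (2 * lam) with hc
  set v : Fin d → EuclideanSpace ℝ (Fin d) :=
    fun j => Real.sqrt (c j) • EuclideanSpace.single j (1 : ℝ) with hv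
  have hcrit : ∀ q : EuclideanSpace ℝ (Fin d), gradient ℓ q = 0 ↔
      ∀ i, (Λ i + 2 * lam * (‖q‖ ^ 2 - 1)) * q i = 0 := by
    intro q
    rw [(gradAux d Λ lam ℓ hℓ q).gradient]
    constructor
    · intro h i
      have h' : (2 * Λ i + 4 * lam * (‖q‖ ^ 2 - 1)) * q i = 0 := congrFun (congrArg WithLp.ofLp h) i
      nlinarith [h']
    · intro h
      ext i
      have := h i
      show (2 * Λ i + 4 * lam * (‖q‖ ^ 2 - 1)) * q i = 0
      nlinarith [this]
  have hcoord : ∀ (t : ℝ) (j i : Fin d),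
      ((t • EuclideanSpace.single j (1 : ℝ) : EuclideanSpace ℝ (Fin d))) i =
        if i = j then t else 0 := by
    intro t j i
    simp [EuclideanSpace.single_apply, mul_ite]
  have hnorm_smul : ∀ (t : ℝ) (j : Fin d),
      ‖(t • EuclideanSpace.single j (1 : ℝ) : EuclideanSpace ℝ (Fin d))‖ ^ 2 = t ^ 2 := by
    intro t j
    rw [norm_smul, mul_pow, EuclideanSpace.norm_single]
    simp [sq_abs]
  have hmem : ∀ (t : ℝ) (j : Fin d), t ^ 2 = c j →
      gradient ℓ (t • EuclideanSpace.single j (1 : ℝ) : EuclideanSpace ℝ (Fin d)) = 0 := by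
    intro t j ht
    rw [hcrit]
    intro i
    rw [hnorm_smul, hcoord, ht]
    by_cases hij : i = j
    · have hz : Λ j + 2 * lam * (c j - 1) = 0 := by
        rw [hc]
        field_simp
        ring
      rw [if_pos hij, hij, hz, zero_mul]
    · rw [if_neg hij, mul_zero]
  have hset : {q : EuclideanSpace ℝ (Fin d) | gradient ℓ q = 0} =
      insert 0 {q : EuclideanSpace ℝ (Fin d) | ∃ j : Fin d, Λ j < 2 * lam ∧
        (q = v j ∨ q = -(v j))} := by
    ext q
    simp only [Set.mem_setOf_eq, Set.mem_insert_iff]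
    constructor
    · intro h
      rw [hcrit] at h
      by_cases hq0 : q = 0
      · exact Or.inl hq0
      · right
        obtain ⟨j, hj⟩ : ∃ j, q j ≠ 0 := by
          by_contra hcon
          push_neg at hcon
          exact hq0 (PiLp.ext hcon)
        have hfj : Λ j + 2 * lam * (‖q‖ ^ 2 - 1) = 0 := by
          rcases mul_eq_zero.mp (h j) with h1 | h1
          · exact h1
          · exact absurd h1 hj
        have hzero : ∀ i, i ≠ j → q i = 0 := by
          intro i hij
          by_contra hqi
          have hfi : Λ i + 2 * lam * (‖q‖ ^ 2 - 1) = 0 := by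
            rcases mul_eq_zero.mp (h i) with h1 | h1
            · exact h1
            · exact absurd h1 hqi
          exact hij (hΛ.injective (by linarith))
        have hq_eq : q = (q j • EuclideanSpace.single j (1 : ℝ) :
            EuclideanSpace ℝ (Fin d)) := by
          ext i
          rw [hcoord]
          by_cases hij : i = j
          · rw [if_pos hij, hij]
          · rw [if_neg hij]
            exact hzero i hij
        have hnormq : ‖q‖ ^ 2 = q j ^ 2 := by
          rw [hnorm]
          refine Finset.sum_eq_single j (fun i _ hij => by rw [hzero i hij]; ring)
            (fun hcon => absurd (Finset.mem_univ j) hcon)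
        have hqj2 : q j ^ 2 = c j := by
          rw [hnormq] at hfj
          rw [hc]
          field_simp
          nlinarith [hfj]
        have hcpos : 0 < c j := by
          rw [← hqj2]
          exact pow_two_pos_of_ne_zero hj
        have hΛlt : Λ j < 2 * lam := by
          have hd1 : Λ j / (2 * lam) < 1 := by
            have : (0:ℝ) < 1 - Λ j / (2 * lam) := by
              have := hcpos
              rw [hc] at this
              simpa using this
            linarith
          calc Λ j = Λ j / (2 * lam) * (2 * lam) := by field_simp
            _ < 1 * (2 * lam) := mul_lt_mul_of_pos_right hd1 (by positivity)
            _ = 2 * lam := one_mul _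
        refine ⟨j, hΛlt, ?_⟩
        have habs : |q j| = Real.sqrt (c j) := by
          rw [← Real.sqrt_sq_eq_abs, hqj2]
        rcases (abs_eq (Real.sqrt_nonneg _)).mp habs with h1 | h1
        · left
          rw [hq_eq, h1, hv]
        · right
          rw [hq_eq, h1, hv, neg_smul]
    · intro h
      rcases h with rfl | ⟨j, hΛlt, h⟩
      · rw [hcrit]
        intro i
        have h0 : (0 : EuclideanSpace ℝ (Fin d)) i = 0 := rfl
        rw [h0, mul_zero]
      · have hcnn : (0:ℝ) ≤ c j := by
          rw [hc]
          have : Λ j / (2 * lam) < 1 := (div_lt_one (by positivity)).mpr hΛlt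
          simp only
          linarith
        have hsq : Real.sqrt (c j) ^ 2 = c j := Real.sq_sqrt hcnn
        rcases h with rfl | rfl
        · exact hmem _ j hsq
        · rw [hv, ← neg_smul]
          exact hmem _ j (by rw [neg_pow]; simp [hsq])
  refine ⟨hset, ?_, ?_⟩
  · -- cardinality bound
    set F : Finset (EuclideanSpace ℝ (Fin d)) :=
      insert 0 (Finset.univ.biUnion fun j => {v j, -(v j)}) with hF
    have hsub : {q : EuclideanSpace ℝ (Fin d) | gradient ℓ q = 0} ⊆ ↑F := by
      rw [hset]
      intro q hq
      rcases hq with rfl | ⟨j, _, h | h⟩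
      · exact Finset.mem_coe.mpr (Finset.mem_insert_self _ _)
      · subst h
        exact Finset.mem_coe.mpr (Finset.mem_insert_of_mem
          (Finset.mem_biUnion.mpr ⟨j, Finset.mem_univ j, by simp⟩))
      · subst h
        exact Finset.mem_coe.mpr (Finset.mem_insert_of_mem
          (Finset.mem_biUnion.mpr ⟨j, Finset.mem_univ j, by simp⟩))
    calc {q : EuclideanSpace ℝ (Fin d) | gradient ℓ q = 0}.ncard
        ≤ (↑F : Set (EuclideanSpace ℝ (Fin d))).ncard :=
          Set.ncard_le_ncard hsub F.finite_toSet
      _ = F.card := Set.ncard_coe_finset F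
      _ ≤ (Finset.univ.biUnion fun j =>
            ({v j, -(v j)} : Finset (EuclideanSpace ℝ (Fin d)))).card + 1 :=
          Finset.card_insert_le _ _
      _ ≤ (∑ j : Fin d, ({v j, -(v j)} : Finset (EuclideanSpace ℝ (Fin d))).card) + 1 :=
          Nat.add_le_add_right Finset.card_biUnion_le 1
      _ ≤ (∑ _j : Fin d, 2) + 1 := by
          refine Nat.add_le_add_right (Finset.sum_le_sum fun j _ => ?_) 1
          calc ({v j, -(v j)} : Finset (EuclideanSpace ℝ (Fin d))).card
              ≤ ({-(v j)} : Finset (EuclideanSpace ℝ (Fin d))).card + 1 :=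
                Finset.card_insert_le _ _
            _ = 2 := by simp
      _ = 2 * d + 1 := by simp [Finset.sum_const, mul_comm]
  · -- at least 3
    intro hlt0
    set j0 : Fin d := ⟨0, hd⟩ with hj0
    have hΛlt : Λ j0 < 2 * lam := by
      have : Λ j0 / 2 < lam := hlt0
      linarith
    have hcpos : 0 < c j0 := by
      rw [hc]
      have : Λ j0 / (2 * lam) < 1 := (div_lt_one (by positivity)).mpr hΛlt
      simp only
      linarith
    have hspos : 0 < Real.sqrt (c j0) := Real.sqrt_pos.mpr hcpos
    have hwj : (v j0) j0 = Real.sqrt (c j0) := by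
      rw [hv]
      show Real.sqrt (c j0) * (EuclideanSpace.single j0 (1:ℝ)) j0 = _
      simp [EuclideanSpace.single_apply]
    have hw0 : v j0 ≠ 0 := by
      intro h
      have := congrFun (congrArg WithLp.ofLp h) j0
      rw [hwj] at this
      exact absurd this (ne_of_gt hspos)
    have hwne : v j0 ≠ -(v j0) := by
      intro h
      have h1 := congrFun (congrArg WithLp.ofLp h) j0
      rw [hwj] at h1
      have h2 : (-(v j0) : EuclideanSpace ℝ (Fin d)) j0 = -Real.sqrt (c j0) := by
        show -((v j0) j0) = _
        rw [hwj]
      rw [h2] at h1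
      linarith
    have hsub3 : ({0, v j0, -(v j0)} : Set (EuclideanSpace ℝ (Fin d))) ⊆
        {q : EuclideanSpace ℝ (Fin d) | gradient ℓ q = 0} := by
      rw [hset]
      intro q hq
      rcases hq with rfl | rfl | rfl
      · exact Set.mem_insert _ _
      · exact Set.mem_insert_of_mem _ ⟨j0, hΛlt, Or.inl rfl⟩
      · exact Set.mem_insert_of_mem _ ⟨j0, hΛlt, Or.inr rfl⟩
    have hfin : {q : EuclideanSpace ℝ (Fin d) | gradient ℓ q = 0}.Finite := by
      rw [hset]
      apply Set.Finite.insert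
      apply Set.Finite.subset (Set.finite_range fun p : Fin d × Bool =>
        if p.2 then v p.1 else -(v p.1))
      rintro q ⟨j, _, h | h⟩
      · exact ⟨(j, true), h.symm⟩
      · exact ⟨(j, false), h.symm⟩
    have h0notin : (0 : EuclideanSpace ℝ (Fin d)) ∉
        ({v j0, -(v j0)} : Set (EuclideanSpace ℝ (Fin d))) := by
      intro h
      rcases h with h | h
      · exact hw0 h.symm
      · exact hw0 (neg_eq_zero.mp h.symm)
    have h3 : ({0, v j0, -(v j0)} : Set (EuclideanSpace ℝ (Fin d))).ncard = 3 := by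
      rw [Set.ncard_insert_of_notMem h0notin, Set.ncard_pair hwne]
    calc (3:ℕ) = ({0, v j0, -(v j0)} : Set (EuclideanSpace ℝ (Fin d))).ncard := h3.symm
      _ ≤ {q : EuclideanSpace ℝ (Fin d) | gradient ℓ q = 0}.ncard :=
          Set.ncard_le_ncard hsub3 hfin
end

section
/- Assume λ > λ₁/2 and λ₁ < λ₂. Then for every q ∈ ℝᵈ one has ℓ(q) ≥ λ₁ − λ₁²/(4λ), with equality if and only if q = √(1 − λ₁/(2λ)) e₁ or q = −√(1 − λ₁/(2λ)) e₁. In particular these two points are the global minima of ℓ and ℓ(±√(1 − λ₁/(2λ)) e₁) = λ₁ − λ₁²/(4λ). -/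
theorem aux4 (d : ℕ) (Λ : Fin d → ℝ) (i0 i1 : Fin d) (h0 : (i0 : ℕ) = 0)
    (h1 : (i1 : ℕ) = 1)
    (hΛmono : Monotone Λ) (lam : ℝ) (hlam : 0 < lam)
    (ℓ : EuclideanSpace ℝ (Fin d) → ℝ)
    (hℓ : ∀ q : EuclideanSpace ℝ (Fin d),
      ℓ q = ∑ i, Λ i * q i ^ 2 + lam * (‖q‖ ^ 2 - 1) ^ 2)
    (hlam1 : Λ i0 / 2 < lam) (h12 : Λ i0 < Λ i1)
    (q : EuclideanSpace ℝ (Fin d)) :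
    Λ i0 - (Λ i0) ^ 2 / (4 * lam) ≤ ℓ q ∧
      (ℓ q = Λ i0 - (Λ i0) ^ 2 / (4 * lam) ↔
        q = Real.sqrt (1 - Λ i0 / (2 * lam)) • EuclideanSpace.single i0 (1 : ℝ) ∨
        q = -(Real.sqrt (1 - Λ i0 / (2 * lam)) • EuclideanSpace.single i0 (1 : ℝ))) := by
  set μ := Λ i0 with hμ
  set c := Real.sqrt (1 - μ / (2 * lam)) with hc
  have hts : (0:ℝ) < 1 - μ / (2 * lam) := by
    rw [sub_pos, div_lt_one (by linarith)]; linarith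
  have hc2 : c ^ 2 = 1 - μ / (2 * lam) := Real.sq_sqrt hts.le
  have hnq : ∀ p : EuclideanSpace ℝ (Fin d), ‖p‖ ^ 2 = ∑ i, p i ^ 2 := by
    intro p
    rw [EuclideanSpace.norm_eq, Real.sq_sqrt (by positivity)]
    simp [Real.norm_eq_abs, sq_abs]
  have hΛge : ∀ i : Fin d, μ ≤ Λ i := fun i =>
    hΛmono (Fin.le_def.mpr (by omega))
  have key : ℓ q - (μ - μ ^ 2 / (4 * lam)) =
      (∑ i, (Λ i - μ) * q i ^ 2) +
        lam * ((∑ i, q i ^ 2) - (1 - μ / (2 * lam))) ^ 2 := by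
    have hsplit : ∑ i, (Λ i - μ) * q i ^ 2 =
        (∑ i, Λ i * q i ^ 2) - μ * ∑ i, q i ^ 2 := by
      rw [Finset.mul_sum, ← Finset.sum_sub_distrib]
      exact Finset.sum_congr rfl fun i _ => by ring
    rw [hℓ, hnq, hsplit]
    field_simp
    ring
  have hS : 0 ≤ ∑ i, (Λ i - μ) * q i ^ 2 :=
    Finset.sum_nonneg fun i _ => mul_nonneg (sub_nonneg.2 (hΛge i)) (sq_nonneg _)
  have hQ : 0 ≤ lam * ((∑ i, q i ^ 2) - (1 - μ / (2 * lam))) ^ 2 :=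
    mul_nonneg hlam.le (sq_nonneg _)
  have hval : ∀ s : ℝ, s ^ 2 = 1 - μ / (2 * lam) →
      ℓ (s • EuclideanSpace.single i0 (1:ℝ)) = μ - μ ^ 2 / (4 * lam) := by
    intro s hs
    have happ : ∀ i : Fin d,
        ((s • EuclideanSpace.single i0 (1:ℝ)) : EuclideanSpace ℝ (Fin d)) i =
          if i = i0 then s else 0 := by
      intro i
      simp only [PiLp.smul_apply, EuclideanSpace.single_apply, smul_eq_mul]
      split <;> simp
    have hsum1 : ∑ i, Λ i * ((s • EuclideanSpace.single i0 (1:ℝ)) : EuclideanSpace ℝ (Fin d)) i ^ 2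
        = μ * s ^ 2 := by
      rw [Finset.sum_eq_single_of_mem i0 (Finset.mem_univ i0)]
      · rw [happ]; simp [hμ]
      · intro i _ hi; rw [happ]; simp [hi]
    have hsum2 : ∑ i, ((s • EuclideanSpace.single i0 (1:ℝ)) : EuclideanSpace ℝ (Fin d)) i ^ 2
        = s ^ 2 := by
      rw [Finset.sum_eq_single_of_mem i0 (Finset.mem_univ i0)]
      · rw [happ]; simp
      · intro i _ hi; rw [happ]; simp [hi]
    rw [hℓ, hnq, hsum1, hsum2, hs]
    field_simp
    ring
  constructor
  · linarith
  constructor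
  · intro h
    have hzero1 : (∑ i, (Λ i - μ) * q i ^ 2) = 0 := by
      nlinarith [sq_nonneg ((∑ i, q i ^ 2) - (1 - μ / (2 * lam)))]
    have hzero2 : ((∑ i, q i ^ 2) - (1 - μ / (2 * lam))) = 0 := by
      have he : lam * ((∑ i, q i ^ 2) - (1 - μ / (2 * lam))) ^ 2 = 0 := by linarith
      have he2 : ((∑ i, q i ^ 2) - (1 - μ / (2 * lam))) ^ 2 = 0 := by
        rcases mul_eq_zero.1 he with h' | h'
        · exact absurd h' (ne_of_gt hlam)
        · exact h'
      exact pow_eq_zero_iff (n := 2) (by norm_num) |>.1 he2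
    have hterm := (Finset.sum_eq_zero_iff_of_nonneg
      (fun i _ => mul_nonneg (sub_nonneg.2 (hΛge i)) (sq_nonneg (q i)))).1 hzero1
    have hqz : ∀ i : Fin d, i ≠ i0 → q i = 0 := by
      intro i hi
      have hge : Λ i1 ≤ Λ i := hΛmono (Fin.le_def.mpr (by
        have : (i : ℕ) ≠ 0 := fun hh => hi (Fin.ext (by omega))
        omega))
      have ht := hterm i (Finset.mem_univ i)
      have hq2 : q i ^ 2 = 0 := by
        by_contra hne
        have hpos : 0 < Λ i - μ := by linarith
        have : 0 < q i ^ 2 := lt_of_le_of_ne (sq_nonneg _) (Ne.symm hne)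
        nlinarith
      exact pow_eq_zero_iff (n := 2) (by norm_num) |>.1 hq2
    have hsum0 : (∑ i, q i ^ 2) = q i0 ^ 2 := by
      refine Finset.sum_eq_single_of_mem i0 (Finset.mem_univ i0) fun i _ hi => ?_
      rw [hqz i hi]; ring
    have hq0sq : q i0 ^ 2 = 1 - μ / (2 * lam) := by
      rw [hsum0] at hzero2; linarith
    have habs : |q i0| = c := by
      rw [← Real.sqrt_sq_eq_abs, hq0sq, hc]
    rcases (abs_eq (Real.sqrt_nonneg _)).1 habs with h' | h'
    · left
      ext i
      rcases eq_or_ne i i0 with rfl | hi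
      · simp [h', hc]
      · simp [EuclideanSpace.single_apply, hi, hqz i hi]
    · right
      ext i
      rcases eq_or_ne i i0 with rfl | hi
      · simp [h', hc]
      · simp [EuclideanSpace.single_apply, hi, hqz i hi]
  · rintro (rfl | rfl)
    · exact hval c hc2
    · rw [← neg_smul]
      exact hval (-c) (by rw [← hc2]; ring)


/-- If `λ > λ₁/2` and `λ₁ < λ₂`, then `ℓ(q) ≥ λ₁ − λ₁²/(4λ)` for every `q`,
with equality iff `q = ±√(1 − λ₁/(2λ)) e₁`; these two points are the global minima of `ℓ`. -/
theorem stmt4 (d : ℕ) (hd : 2 ≤ d) (Λ : Fin d → ℝ) (hΛ0 : 0 ≤ Λ ⟨0, by omega⟩)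
    (hΛmono : Monotone Λ) (lam : ℝ) (hlam : 0 < lam)
    (ℓ : EuclideanSpace ℝ (Fin d) → ℝ)
    (hℓ : ∀ q : EuclideanSpace ℝ (Fin d),
      ℓ q = ∑ i, Λ i * q i ^ 2 + lam * (‖q‖ ^ 2 - 1) ^ 2)
    (hlam1 : Λ ⟨0, by omega⟩ / 2 < lam)
    (h12 : Λ ⟨0, by omega⟩ < Λ ⟨1, by omega⟩) :
    ∀ q : EuclideanSpace ℝ (Fin d),
      Λ ⟨0, by omega⟩ - (Λ ⟨0, by omega⟩) ^ 2 / (4 * lam) ≤ ℓ q ∧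
      (ℓ q = Λ ⟨0, by omega⟩ - (Λ ⟨0, by omega⟩) ^ 2 / (4 * lam) ↔
        q = Real.sqrt (1 - Λ ⟨0, by omega⟩ / (2 * lam)) •
              EuclideanSpace.single (⟨0, by omega⟩ : Fin d) (1 : ℝ) ∨
        q = -(Real.sqrt (1 - Λ ⟨0, by omega⟩ / (2 * lam)) •
              EuclideanSpace.single (⟨0, by omega⟩ : Fin d) (1 : ℝ))) := by
  intro q
  exact aux4 d Λ ⟨0, by omega⟩ ⟨1, by omega⟩ rfl rfl hΛmono lam hlam ℓ hℓ hlam1 h12 q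
end

section
/- Let j ∈ {2, …, d} with λ_j < 2λ and λ₁ < λ_j, and set q_j = √(1 − λ_j/(2λ)) e_j. Then the Hessian of ℓ at ±q_j has a strictly negative eigenvalue; specifically e₁ᵀ ∇²ℓ(±q_j) e₁ = 2(λ₁ − λ_j) < 0. Hence ±q_j are strict saddle points or local maxima of ℓ. -/
open Finset Filter Topology

variable {d : ℕ}

local notation "E" => EuclideanSpace ℝ (Fin d)

lemma normsq (q : E) : ‖q‖ ^ 2 = ∑ i, q i ^ 2 := by
  rw [EuclideanSpace.norm_eq, Real.sq_sqrt (by positivity)]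
  simp [sq_abs]

lemma hS (q : E) : HasFDerivAt (fun q : E => ∑ i, q i ^ 2)
    (∑ i, (2 * q i) • (EuclideanSpace.proj i : E →L[ℝ] ℝ)) q := by
  apply HasFDerivAt.fun_sum
  intro i _
  have h := (hasDerivAt_pow 2 (q i)).comp_hasFDerivAt q ((EuclideanSpace.proj i : EuclideanSpace ℝ (Fin d) →L[ℝ] ℝ)).hasFDerivAt
  simpa [Function.comp_def] using h

noncomputable def Pj (i : Fin d) : EuclideanSpace ℝ (Fin d) →L[ℝ] ℝ := EuclideanSpace.proj i

noncomputable def L1 (Λ : Fin d → ℝ) : E →L[ℝ] E →L[ℝ] ℝ :=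
  ∑ i, (Λ i * 2) • ((Pj i).smulRight (Pj i))

noncomputable def L2 : E →L[ℝ] E →L[ℝ] ℝ := ∑ i, (2 : ℝ) • ((Pj i).smulRight (Pj i))

lemma L1_apply (Λ : Fin d → ℝ) (q : E) :
    L1 Λ q = ∑ i, (Λ i * (2 * q i)) • (Pj i) := by
  ext v
  simp [L1, ContinuousLinearMap.sum_apply, Pj]
  exact Finset.sum_congr rfl fun i _ => by ring

lemma L2_apply (q : E) : L2 q = ∑ i, (2 * q i) • (Pj i) := by
  ext v
  simp [L2, ContinuousLinearMap.sum_apply, Pj, mul_assoc]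

lemma hS' (q : E) : HasFDerivAt (fun q : E => ∑ i, q i ^ 2) (L2 q) q := by
  rw [L2_apply]; exact hS q

lemma hD (Λ : Fin d → ℝ) (lam : ℝ) (q : E) :
    HasFDerivAt (fun q : E => ∑ i, Λ i * q i ^ 2 + lam * ((∑ i, q i ^ 2) - 1) ^ 2)
      (L1 Λ q + (lam * (2 * ((∑ i, q i ^ 2) - 1))) • L2 q) q := by
  have h1 : HasFDerivAt (fun q : E => ∑ i, Λ i * q i ^ 2) (L1 Λ q) q := by
    rw [L1_apply]
    apply HasFDerivAt.fun_sum
    intro i _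
    have h := ((hasDerivAt_pow 2 (q i)).const_mul (Λ i)).comp_hasFDerivAt q
      ((EuclideanSpace.proj i : EuclideanSpace ℝ (Fin d) →L[ℝ] ℝ)).hasFDerivAt
    simpa [Pj, smul_smul, Function.comp_def] using h
  have houter : HasDerivAt (fun x : ℝ => lam * (x - 1) ^ 2)
      (lam * (2 * ((∑ i, q i ^ 2) - 1))) ((∑ i, q i ^ 2)) := by
    simpa [mul_comm, mul_assoc] using
      ((((hasDerivAt_id ((∑ i, q i ^ 2))).sub_const 1).pow 2).const_mul lam)
  have h2 := houter.comp_hasFDerivAt q (hS' q)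
  exact h1.add (by simpa [smul_smul, Function.comp_def] using h2)

lemma hB (Λ : Fin d → ℝ) (lam : ℝ) (p : E) :
    HasFDerivAt (fun q : E => L1 Λ q + (lam * (2 * ((∑ i, q i ^ 2) - 1))) • L2 q)
      (L1 Λ + ((lam * (2 * ((∑ i, p i ^ 2) - 1))) • L2 +
        (lam • (2 : ℝ) • L2 p).smulRight (L2 p))) p := by
  have hc : HasFDerivAt (fun q : E => lam * (2 * ((∑ i, q i ^ 2) - 1)))
      (lam • (2 : ℝ) • L2 p) p := (((hS' p).sub_const 1).const_mul 2).const_mul lam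
  exact (L1 Λ).hasFDerivAt.add (hc.smul L2.hasFDerivAt)

lemma hess (Λ : Fin d → ℝ) (lam : ℝ) (ℓ : E → ℝ)
    (hℓ' : ∀ q : E, ℓ q = ∑ i, Λ i * q i ^ 2 + lam * ((∑ i, q i ^ 2) - 1) ^ 2)
    (i0 : Fin d) (p : E) (hp : p i0 = 0) :
    fderiv ℝ (fderiv ℝ ℓ) p (EuclideanSpace.single i0 (1:ℝ)) (EuclideanSpace.single i0 (1:ℝ))
      = Λ i0 * 2 + lam * (2 * ((∑ i, p i ^ 2) - 1)) * 2 := by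
  have hℓeq : ℓ = fun q : E => ∑ i, Λ i * q i ^ 2 + lam * ((∑ i, q i ^ 2) - 1) ^ 2 :=
    funext hℓ'
  have hfe : fderiv ℝ ℓ =
      fun q : E => L1 Λ q + (lam * (2 * ((∑ i, q i ^ 2) - 1))) • L2 q := by
    funext q
    rw [hℓeq]
    exact (hD Λ lam q).fderiv
  rw [hfe, (hB Λ lam p).fderiv]
  simp [L1, L2, Pj, ContinuousLinearMap.sum_apply, EuclideanSpace.single_apply,
    Finset.sum_ite_eq', hp, mul_ite, ite_mul, mul_comm, mul_assoc]

lemma notMin (Λ : Fin d → ℝ) (lam : ℝ) (hlam : 0 < lam) (ℓ : E → ℝ)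
    (hℓ' : ∀ q : E, ℓ q = ∑ i, Λ i * q i ^ 2 + lam * ((∑ i, q i ^ 2) - 1) ^ 2)
    (i0 : Fin d) (p : E) (hp : p i0 = 0)
    (hneg : Λ i0 + 2 * lam * ((∑ i, p i ^ 2) - 1) < 0) :
    ¬ IsLocalMin ℓ p := by
  intro h
  set e0 : E := EuclideanSpace.single i0 (1 : ℝ) with he0
  set A : ℝ := Λ i0 + 2 * lam * ((∑ i, p i ^ 2) - 1) with hA
  have hcoord : ∀ (t : ℝ) (i : Fin d),
      (p + t • e0) i = p i + t * (if i = i0 then 1 else 0) := by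
    intro t i
    simp [he0, EuclideanSpace.single_apply]
  have sumsq : ∀ (t : ℝ) (c : Fin d → ℝ),
      ∑ i, c i * ((p + t • e0) i) ^ 2 = (∑ i, c i * p i ^ 2) + c i0 * t ^ 2 := by
    intro t c
    have step : ∀ i, c i * ((p + t • e0) i) ^ 2
        = c i * p i ^ 2 + (if i = i0 then c i0 * t ^ 2 else 0) := by
      intro i
      by_cases hi : i = i0
      · subst hi; rw [hcoord]; simp [hp]
      · rw [hcoord]; simp [hi]
    rw [Finset.sum_congr rfl fun i _ => step i, Finset.sum_add_distrib,
      Finset.sum_ite_eq' Finset.univ i0]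
    simp
  have key : ∀ t : ℝ, ℓ (p + t • e0) = ℓ p + A * t ^ 2 + lam * t ^ 4 := by
    intro t
    have h1 := sumsq t Λ
    have h2 := sumsq t (fun _ => (1 : ℝ))
    simp only [one_mul] at h2
    rw [hℓ' (p + t • e0), hℓ' p, h1, h2, hA]
    ring
  have hcont : Filter.Tendsto (fun t : ℝ => p + t • e0) (𝓝 0) (𝓝 p) := by
    have hc : Continuous fun t : ℝ => p + t • e0 := by continuity
    simpa using hc.tendsto 0
  have h2 : ∀ᶠ t in 𝓝 (0 : ℝ), ℓ p ≤ ℓ (p + t • e0) := hcont.eventually h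
  have h3 : ∀ᶠ t in 𝓝[>] (0 : ℝ), ℓ p ≤ ℓ (p + t • e0) := nhdsWithin_le_nhds h2
  have h0 : (0 : ℝ) < -A / lam := by
    apply div_pos (by linarith) hlam
  have h4 : ∀ᶠ t in 𝓝[>] (0 : ℝ), t ^ 2 < -A / lam := by
    apply nhdsWithin_le_nhds
    have hc : Continuous fun t : ℝ => t ^ 2 := by continuity
    have ht := hc.tendsto 0
    simp only [ne_eq, zero_pow, OfNat.ofNat_ne_zero, not_false_eq_true] at ht
    exact ht.eventually (gt_mem_nhds h0)
  have h5 : ∀ᶠ t in 𝓝[>] (0 : ℝ), 0 < t := eventually_mem_nhdsWithin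
  obtain ⟨t, ht1, ht2, ht3⟩ := (h3.and (h4.and h5)).exists
  have hk := key t
  rw [hk] at ht1
  have htt : lam * t ^ 2 < -A := by
    rw [lt_div_iff₀ hlam] at ht2
    nlinarith [ht2]
  have h6 : A + lam * t ^ 2 < 0 := by linarith
  have h7 : (0:ℝ) < t ^ 2 := by positivity
  nlinarith [mul_neg_of_pos_of_neg h7 h6]


/-- For `j ≥ 2` with `λ_j < 2λ` and `λ₁ < λ_j`, at `±q_j = ±√(1 − λ_j/(2λ)) e_j`
the Hessian of `ℓ` has a strictly negative eigenvalue: `e₁ᵀ ∇²ℓ(±q_j) e₁ = 2(λ₁ − λ_j) < 0`;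
hence `±q_j` are not local minima (they are strict saddle points or local maxima). -/
theorem stmt6 (d : ℕ) (hd : 0 < d) (Λ : Fin d → ℝ) (hΛ0 : 0 ≤ Λ ⟨0, hd⟩)
    (hΛmono : Monotone Λ) (lam : ℝ) (hlam : 0 < lam)
    (ℓ : EuclideanSpace ℝ (Fin d) → ℝ)
    (hℓ : ∀ q : EuclideanSpace ℝ (Fin d),
      ℓ q = ∑ i, Λ i * q i ^ 2 + lam * (‖q‖ ^ 2 - 1) ^ 2)
    (j : Fin d) (hj2 : (⟨0, hd⟩ : Fin d) < j) (hj : Λ j < 2 * lam)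
    (hj1 : Λ ⟨0, hd⟩ < Λ j)
    (qj : EuclideanSpace ℝ (Fin d))
    (hqj : qj = Real.sqrt (1 - Λ j / (2 * lam)) • EuclideanSpace.single j (1 : ℝ)) :
    (fderiv ℝ (fderiv ℝ ℓ) qj
        (EuclideanSpace.single (⟨0, hd⟩ : Fin d) (1 : ℝ))
        (EuclideanSpace.single (⟨0, hd⟩ : Fin d) (1 : ℝ)) = 2 * (Λ ⟨0, hd⟩ - Λ j)) ∧
    (fderiv ℝ (fderiv ℝ ℓ) (-qj)
        (EuclideanSpace.single (⟨0, hd⟩ : Fin d) (1 : ℝ))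
        (EuclideanSpace.single (⟨0, hd⟩ : Fin d) (1 : ℝ)) = 2 * (Λ ⟨0, hd⟩ - Λ j)) ∧
    2 * (Λ ⟨0, hd⟩ - Λ j) < 0 ∧
    ¬ IsLocalMin ℓ qj ∧ ¬ IsLocalMin ℓ (-qj) := by
  set i0 : Fin d := ⟨0, hd⟩ with hi0
  have hℓ' : ∀ q : EuclideanSpace ℝ (Fin d),
      ℓ q = ∑ i, Λ i * q i ^ 2 + lam * ((∑ i, q i ^ 2) - 1) ^ 2 := by
    intro q; rw [hℓ q, normsq q]
  have hne : i0 ≠ j := hj2.ne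
  have ha : (0:ℝ) ≤ 1 - Λ j / (2 * lam) := by
    have : Λ j / (2 * lam) < 1 := (div_lt_one (by linarith)).2 hj
    linarith
  have hqj0 : qj i0 = 0 := by
    rw [hqj]; simp [EuclideanSpace.single_apply, hne]
  have hnqj0 : (-qj) i0 = 0 := by
    simp [hqj0]
  have hsq : ∀ i, (qj i) ^ 2 = if i = j then 1 - Λ j / (2 * lam) else 0 := by
    intro i
    rw [hqj]
    by_cases hij : i = j
    · simp [hij, EuclideanSpace.single_apply, mul_pow, Real.sq_sqrt ha]
    · simp [hij, EuclideanSpace.single_apply]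
  have hSq : ∑ i, (qj i) ^ 2 = 1 - Λ j / (2 * lam) := by
    rw [Finset.sum_congr rfl fun i _ => hsq i, Finset.sum_ite_eq' Finset.univ j]
    simp
  have hSnq : ∑ i, ((-qj) i) ^ 2 = 1 - Λ j / (2 * lam) := by
    simpa using hSq
  have hval : Λ i0 * 2 + lam * (2 * ((1 - Λ j / (2 * lam)) - 1)) * 2
      = 2 * (Λ i0 - Λ j) := by
    field_simp
    ring
  have hneg : Λ i0 + 2 * lam * ((1 - Λ j / (2 * lam)) - 1) < 0 := by
    have : 2 * lam * ((1 - Λ j / (2 * lam)) - 1) = -Λ j := by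
      field_simp
      ring
    rw [this]; linarith
  refine ⟨?_, ?_, by linarith, ?_, ?_⟩
  · rw [hess Λ lam ℓ hℓ' i0 qj hqj0, hSq, hval]
  · rw [hess Λ lam ℓ hℓ' i0 (-qj) hnqj0, hSnq, hval]
  · exact notMin Λ lam hlam ℓ hℓ' i0 qj hqj0 (by rw [hSq]; exact hneg)
  · exact notMin Λ lam hlam ℓ hℓ' i0 (-qj) hnqj0 (by rw [hSnq]; exact hneg)
end

section
/- Let D be a symmetric d×d real matrix, let λ ∈ ℝ, and let v ∈ ℝᵈ satisfy Dv = 0 and ‖v‖ = 1. Define ℓ(q) = qᵀDq + λ(‖q‖² − 1)² and h(q) = ‖q − v‖² / (1 + ‖q‖²). Then for every q ∈ ℝᵈ, ⟨∇h(q), ∇ℓ(q)⟩ = 8 (vᵀq) · (qᵀDq + λ(‖q‖² − 1)²) / (1 + ‖q‖²)². -/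
open scoped Matrix

/-- For symmetric `D`, `Dv = 0`, `‖v‖ = 1`,
`ℓ(q) = qᵀDq + λ(‖q‖² − 1)²` and `h(q) = ‖q − v‖²/(1 + ‖q‖²)`, one has
`⟨∇h(q), ∇ℓ(q)⟩ = 8 (vᵀq)(qᵀDq + λ(‖q‖² − 1)²)/(1 + ‖q‖²)²` for every `q`. -/
theorem stmt13 (d : ℕ) (D : Matrix (Fin d) (Fin d) ℝ) (hD : Dᵀ = D)
    (lam : ℝ) (v : EuclideanSpace ℝ (Fin d))
    (hv : (D *ᵥ fun i => v i) = 0) (hvnorm : ‖v‖ = 1)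
    (ℓ h : EuclideanSpace ℝ (Fin d) → ℝ)
    (hℓ : ∀ q : EuclideanSpace ℝ (Fin d),
      ℓ q = (fun i => q i) ⬝ᵥ (D *ᵥ fun i => q i) + lam * (‖q‖ ^ 2 - 1) ^ 2)
    (hh : ∀ q : EuclideanSpace ℝ (Fin d),
      h q = ‖q - v‖ ^ 2 / (1 + ‖q‖ ^ 2)) :
    ∀ q : EuclideanSpace ℝ (Fin d),
      (inner ℝ (gradient h q) (gradient ℓ q) : ℝ) =
        8 * (inner ℝ v q : ℝ) *
          ((fun i => q i) ⬝ᵥ (D *ᵥ fun i => q i) + lam * (‖q‖ ^ 2 - 1) ^ 2) /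
          (1 + ‖q‖ ^ 2) ^ 2 := by
  classical
  intro q
  set A : EuclideanSpace ℝ (Fin d) →L[ℝ] EuclideanSpace ℝ (Fin d) :=
    Matrix.toEuclideanCLM (𝕜 := ℝ) D with hAdef
  have hAapp : ∀ (y : EuclideanSpace ℝ (Fin d)) (i : Fin d),
      A y i = (D *ᵥ fun j => y j) i := by
    intro y i
    have := Matrix.ofLp_toEuclideanCLM (𝕜 := ℝ) D y
    exact congrFun this i
  have hIA : ∀ x y : EuclideanSpace ℝ (Fin d),
      (inner ℝ x (A y) : ℝ) = (fun i => x i) ⬝ᵥ (D *ᵥ fun j => y j) := by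
    intro x y
    simp [PiLp.inner_apply, hAapp, dotProduct, mul_comm]
  have hherm : D.IsHermitian := by
    simpa [Matrix.IsHermitian, Matrix.conjTranspose_eq_transpose_of_trivial] using hD
  have hsymm : ∀ x y : EuclideanSpace ℝ (Fin d),
      (inner ℝ (A x) y : ℝ) = inner ℝ x (A y) := by
    intro x y
    have := (Matrix.isHermitian_iff_isSymmetric.mp hherm) x y
    simpa [hAdef, ← Matrix.coe_toEuclideanCLM_eq_toEuclideanLin] using this
  have hAv : A v = 0 := by
    ext i
    simpa [hAapp] using congrFun hv i
  have hvAq : (inner ℝ v (A q) : ℝ) = 0 := by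
    rw [← hsymm, hAv, inner_zero_left]
  have hs : (inner ℝ q q : ℝ) = ‖q‖ ^ 2 := real_inner_self_eq_norm_sq q
  have hnn : (0:ℝ) ≤ (inner ℝ q q : ℝ) := real_inner_self_nonneg
  have hdenne : (1:ℝ) + (inner ℝ q q : ℝ) ≠ 0 := by positivity
  set c : ℝ := 4 * lam * ((inner ℝ q q : ℝ) - 1) with hc
  set gl : EuclideanSpace ℝ (Fin d) := (2:ℝ) • A q + c • q with hgl
  -- derivative of x ↦ ⟪x, A x⟫
  have hL1 : HasFDerivAt (fun x : EuclideanSpace ℝ (Fin d) => (inner ℝ x (A x) : ℝ))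
      ((fderivInnerCLM ℝ (q, A q)).comp ((ContinuousLinearMap.id ℝ _).prod A)) q := by
    exact (hasFDerivAt_id q).inner ℝ (A.hasFDerivAt)
  -- derivative of x ↦ ⟪x, x⟫
  have hsq : HasFDerivAt (fun x : EuclideanSpace ℝ (Fin d) => (inner ℝ x x : ℝ))
      ((fderivInnerCLM ℝ (q, q)).comp ((ContinuousLinearMap.id ℝ _).prod (ContinuousLinearMap.id ℝ _))) q :=
    (hasFDerivAt_id q).inner ℝ (hasFDerivAt_id q)
  have hg' : HasDerivAt (fun t : ℝ => lam * (t - 1) ^ 2)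
      (lam * (2 * ((inner ℝ q q : ℝ) - 1))) (inner ℝ q q : ℝ) := by
    have := (((hasDerivAt_id (inner ℝ q q : ℝ)).sub_const 1).pow 2).const_mul lam
    simpa using this
  have hL2 : HasFDerivAt (fun x : EuclideanSpace ℝ (Fin d) => lam * ((inner ℝ x x : ℝ) - 1) ^ 2)
      ((lam * (2 * ((inner ℝ q q : ℝ) - 1))) •
        ((fderivInnerCLM ℝ (q, q)).comp
          ((ContinuousLinearMap.id ℝ _).prod (ContinuousLinearMap.id ℝ _)))) q :=
    by exact
      hg'.comp_hasFDerivAt (f := fun x : EuclideanSpace ℝ (Fin d) => (inner ℝ x x : ℝ)) q hsq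
  have hℓfun : ℓ = fun x : EuclideanSpace ℝ (Fin d) =>
      (inner ℝ x (A x) : ℝ) + lam * ((inner ℝ x x : ℝ) - 1) ^ 2 := by
    funext x
    rw [hℓ x, hIA x x, real_inner_self_eq_norm_sq]
  have hLℓ : HasFDerivAt ℓ _ q :=
    (hL1.add hL2).congr_of_eventuallyEq (Filter.Eventually.of_forall fun x => by rw [hℓfun]; rfl)
  have hgradℓ : gradient ℓ q = gl := by
    refine HasGradientAt.gradient ?_
    rw [hasGradientAt_iff_hasFDerivAt]
    refine hLℓ.congr_fderiv ?_
    symm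
    ext y
    simp only [InnerProductSpace.toDual_apply_apply, ContinuousLinearMap.add_apply,
      ContinuousLinearMap.coe_comp', Function.comp_apply, fderivInnerCLM_apply,
      ContinuousLinearMap.smul_apply, ContinuousLinearMap.prod_apply,
      ContinuousLinearMap.coe_id', id, smul_eq_mul, hgl]
    rw [inner_add_left, real_inner_smul_left, real_inner_smul_left, ← hsymm q y]
    rw [real_inner_comm y (A q), real_inner_comm y q]
    ring
  -- derivative of h
  have hnum : HasFDerivAt (fun x : EuclideanSpace ℝ (Fin d) => (inner ℝ (x - v) (x - v) : ℝ))
      ((fderivInnerCLM ℝ (q - v, q - v)).comp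
        ((ContinuousLinearMap.id ℝ _).prod (ContinuousLinearMap.id ℝ _))) q :=
    ((hasFDerivAt_id q).sub_const v).inner ℝ ((hasFDerivAt_id q).sub_const v)
  have hden : HasFDerivAt (fun x : EuclideanSpace ℝ (Fin d) => 1 + (inner ℝ x x : ℝ))
      ((fderivInnerCLM ℝ (q, q)).comp
        ((ContinuousLinearMap.id ℝ _).prod (ContinuousLinearMap.id ℝ _))) q :=
    hsq.const_add 1
  have hinv : HasFDerivAt (fun x : EuclideanSpace ℝ (Fin d) => (1 + (inner ℝ x x : ℝ))⁻¹)
      ((-(((1 : ℝ) + (inner ℝ q q : ℝ)) ^ 2)⁻¹) •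
        ((fderivInnerCLM ℝ (q, q)).comp
          ((ContinuousLinearMap.id ℝ _).prod (ContinuousLinearMap.id ℝ _)))) q := by
    exact
      (hasDerivAt_inv hdenne).comp_hasFDerivAt
        (f := fun x : EuclideanSpace ℝ (Fin d) => 1 + (inner ℝ x x : ℝ)) q hden
  have hhfun : h = fun x : EuclideanSpace ℝ (Fin d) =>
      (inner ℝ (x - v) (x - v) : ℝ) * (1 + (inner ℝ x x : ℝ))⁻¹ := by
    funext x
    rw [hh x, div_eq_mul_inv, real_inner_self_eq_norm_sq, real_inner_self_eq_norm_sq]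
  have hLh : HasFDerivAt h _ q :=
    (hnum.mul hinv).congr_of_eventuallyEq (Filter.Eventually.of_forall fun x => by rw [hhfun]; rfl)
  have hgradh : (inner ℝ (gradient h q) (gradient ℓ q) : ℝ) = (fderiv ℝ h q) gl := by
    rw [hgradℓ]
    exact InnerProductSpace.toDual_symm_apply
  rw [hgradh, hLh.fderiv]
  -- inner ℝ product values
  have e1 : (inner ℝ q gl : ℝ) = 2 * (inner ℝ q (A q) : ℝ) + c * (inner ℝ q q : ℝ) := by
    rw [hgl, inner_add_right, real_inner_smul_right, real_inner_smul_right]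
  have e2 : (inner ℝ v gl : ℝ) = c * (inner ℝ v q : ℝ) := by
    rw [hgl, inner_add_right, real_inner_smul_right, real_inner_smul_right, hvAq]
    ring
  have e1' : (inner ℝ gl q : ℝ) = 2 * (inner ℝ q (A q) : ℝ) + c * (inner ℝ q q : ℝ) := by
    rw [real_inner_comm]; exact e1
  have e2' : (inner ℝ gl v : ℝ) = c * (inner ℝ v q : ℝ) := by
    rw [real_inner_comm]; exact e2
  have evv : (inner ℝ v v : ℝ) = 1 := by
    rw [real_inner_self_eq_norm_sq, hvnorm]; norm_num
  have eqv : (inner ℝ q v : ℝ) = (inner ℝ v q : ℝ) := real_inner_comm v q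
  simp only [ContinuousLinearMap.add_apply, ContinuousLinearMap.smul_apply,
    ContinuousLinearMap.coe_comp', Function.comp_apply, fderivInnerCLM_apply,
    ContinuousLinearMap.prod_apply, ContinuousLinearMap.coe_id', id, smul_eq_mul]
  simp only [inner_sub_left, inner_sub_right]
  rw [← hIA q q, ← hs]
  simp only [e1, e2, e1', e2', evv, eqv]
  rw [hc]
  generalize (inner ℝ q (A q) : ℝ) = P
  generalize (inner ℝ v q : ℝ) = T
  generalize hS : (inner ℝ q q : ℝ) = S at hdenne ⊢
  field_simp
  ring
end

section
/- Let D be a symmetric positive semidefinite d×d real matrix, let λ > 0, and let v ∈ ℝᵈ satisfy ‖v‖ = 1 and ker D = span{v}. Define ℓ(q) = qᵀDq + λ(‖q‖² − 1)² and h(q) = ‖q − v‖² / (1 + ‖q‖²). Then for every q ∈ ℝᵈ with vᵀq > 0, one has ⟨∇h(q), ∇ℓ(q)⟩ ≥ 0, with equality if and only if q = v. In particular, h is strictly decreasing along the gradient flow dq/dt = −∇ℓ(q) at every point of the half-space {q : vᵀq > 0} other than v. -/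
open scoped Matrix

local notation "⟪" x ", " y "⟫" => @inner ℝ _ _ x y

set_option maxHeartbeats 2000000

/-- For symmetric positive semidefinite `D`, `λ > 0`, `‖v‖ = 1` and
`ker D = span{v}`, with `ℓ(q) = qᵀDq + λ(‖q‖² − 1)²` and `h(q) = ‖q − v‖²/(1 + ‖q‖²)`,
one has `⟨∇h(q), ∇ℓ(q)⟩ ≥ 0` on the half-space `{q : vᵀq > 0}`, with equality iff `q = v`;
in particular `h` is strictly decreasing along the gradient flow `dq/dt = −∇ℓ(q)` there. -/
theorem stmt14 (d : ℕ) (D : Matrix (Fin d) (Fin d) ℝ) (hD : D.PosSemidef)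
    (lam : ℝ) (hlam : 0 < lam) (v : EuclideanSpace ℝ (Fin d)) (hvnorm : ‖v‖ = 1)
    (hker : ∀ q : EuclideanSpace ℝ (Fin d),
      (D *ᵥ fun i => q i) = 0 ↔ ∃ t : ℝ, q = t • v)
    (ℓ h : EuclideanSpace ℝ (Fin d) → ℝ)
    (hℓ : ∀ q : EuclideanSpace ℝ (Fin d),
      ℓ q = (fun i => q i) ⬝ᵥ (D *ᵥ fun i => q i) + lam * (‖q‖ ^ 2 - 1) ^ 2)
    (hh : ∀ q : EuclideanSpace ℝ (Fin d),
      h q = ‖q - v‖ ^ 2 / (1 + ‖q‖ ^ 2)) :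
    ∀ q : EuclideanSpace ℝ (Fin d), 0 < (inner ℝ v q : ℝ) →
      (0 ≤ (inner ℝ (gradient h q) (gradient ℓ q) : ℝ)) ∧
      ((inner ℝ (gradient h q) (gradient ℓ q) : ℝ) = 0 ↔ q = v) := by
  classical

  set T : EuclideanSpace ℝ (Fin d) →L[ℝ] EuclideanSpace ℝ (Fin d) := LinearMap.toContinuousLinearMap (Matrix.toEuclideanLin D) with hTdef
  have hsym : ∀ x y : EuclideanSpace ℝ (Fin d), ⟪T x, y⟫ = ⟪x, T y⟫ :=
    fun x y => (Matrix.isHermitian_iff_isSymmetric.mp hD.1) x y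
  have hdot : ∀ x : EuclideanSpace ℝ (Fin d), ⟪x, T x⟫ = (fun i => x i) ⬝ᵥ (D *ᵥ fun i => x i) := by
    intro x
    simp [PiLp.inner_apply, dotProduct, hTdef]
    exact Finset.sum_congr rfl fun i _ => mul_comm _ _
  have hTv : T v = 0 := by
    have h0 : (D *ᵥ fun i => v i) = 0 := (hker v).mpr ⟨1, by simp⟩
    ext i
    exact congrFun h0 i
  intro q hcq
  -- scalars
  set s : ℝ := ⟪q, q⟫ with hs
  set c : ℝ := ⟪v, q⟫ with hcdef
  set A : ℝ := ⟪q, T q⟫ with hA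
  have hA0 : 0 ≤ A := by
    rw [hA, hdot q]
    have := hD.dotProduct_mulVec_nonneg (fun i => q i)
    simpa using this
  have hs0 : 0 ≤ s := real_inner_self_nonneg
  have hDn : (0:ℝ) < 1 + s := by linarith
  have hDnne : (1:ℝ) + s ≠ 0 := ne_of_gt hDn
  have hnormsq : ∀ x : EuclideanSpace ℝ (Fin d), ‖x‖ ^ 2 = ⟪x, x⟫ := fun x => (real_inner_self_eq_norm_sq x).symm
  -- gradient of ℓ
  set Gℓ : EuclideanSpace ℝ (Fin d) := (2:ℝ) • T q + (4 * lam * (s - 1)) • q with hGℓ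
  have hgradℓ : HasGradientAt ℓ Gℓ q := by
    have h1 : HasFDerivAt (fun x : EuclideanSpace ℝ (Fin d) => (⟪x, T x⟫ : ℝ))
        ((fderivInnerCLM ℝ (q, T q)).comp ((ContinuousLinearMap.id ℝ (EuclideanSpace ℝ (Fin d))).prod T)) q :=
      (hasFDerivAt_id q).inner ℝ (T.hasFDerivAt)
    have h2 : HasFDerivAt (fun x : EuclideanSpace ℝ (Fin d) => (⟪x, x⟫ : ℝ))
        ((fderivInnerCLM ℝ (q, q)).comp
          ((ContinuousLinearMap.id ℝ (EuclideanSpace ℝ (Fin d))).prod (ContinuousLinearMap.id ℝ (EuclideanSpace ℝ (Fin d))))) q :=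
      (hasFDerivAt_id q).inner ℝ (hasFDerivAt_id q)
    have hg : HasDerivAt (fun u : ℝ => lam * (u - 1) ^ 2) (lam * (2 * (s - 1))) s := by
      have := (((hasDerivAt_id s).sub_const 1).pow 2).const_mul lam
      simpa using this
    have h3 : HasFDerivAt (fun x : EuclideanSpace ℝ (Fin d) => lam * (⟪x, x⟫ - 1) ^ 2)
        ((lam * (2 * (s - 1))) • ((fderivInnerCLM ℝ (q, q)).comp
          ((ContinuousLinearMap.id ℝ (EuclideanSpace ℝ (Fin d))).prod (ContinuousLinearMap.id ℝ (EuclideanSpace ℝ (Fin d)))))) q :=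
      hg.comp_hasFDerivAt (f := fun x : EuclideanSpace ℝ (Fin d) => (⟪x, x⟫ : ℝ)) q h2
    have h4 := h1.add h3
    have hfun : ℓ = fun x : EuclideanSpace ℝ (Fin d) => ⟪x, T x⟫ + lam * (⟪x, x⟫ - 1) ^ 2 := by
      funext x
      rw [hℓ x, hdot x, hnormsq x]
    rw [hfun, hasGradientAt_iff_hasFDerivAt]
    refine h4.congr_fderiv (Eq.symm ?_)
    ext w
    simp only [InnerProductSpace.toDual_apply_apply, ContinuousLinearMap.add_apply,
      ContinuousLinearMap.coe_smul', Pi.smul_apply, ContinuousLinearMap.coe_comp',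
      Function.comp_apply, ContinuousLinearMap.prod_apply, ContinuousLinearMap.coe_id',
      id_eq, fderivInnerCLM_apply, hGℓ]
    simp only [smul_eq_mul, inner_add_left, real_inner_smul_left]
    rw [real_inner_comm (T q) w, hsym q w, real_inner_comm q w]
    ring
  -- gradient of h
  set N : ℝ := ⟪q - v, q - v⟫ with hN
  set Gh : EuclideanSpace ℝ (Fin d) := ((1 + s)⁻¹ * 2) • (q - v) - (N * ((1 + s) ^ 2)⁻¹ * 2) • q with hGh
  have hgradh : HasGradientAt h Gh q := by
    have hid : HasFDerivAt (fun x : EuclideanSpace ℝ (Fin d) => x - v) (ContinuousLinearMap.id ℝ (EuclideanSpace ℝ (Fin d))) q :=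
      (hasFDerivAt_id q).sub_const v
    have hNd : HasFDerivAt (fun x : EuclideanSpace ℝ (Fin d) => (⟪x - v, x - v⟫ : ℝ))
        ((fderivInnerCLM ℝ (q - v, q - v)).comp
          ((ContinuousLinearMap.id ℝ (EuclideanSpace ℝ (Fin d))).prod (ContinuousLinearMap.id ℝ (EuclideanSpace ℝ (Fin d))))) q :=
      hid.inner ℝ hid
    have h2 : HasFDerivAt (fun x : EuclideanSpace ℝ (Fin d) => (1 + ⟪x, x⟫ : ℝ))
        ((fderivInnerCLM ℝ (q, q)).comp
          ((ContinuousLinearMap.id ℝ (EuclideanSpace ℝ (Fin d))).prod (ContinuousLinearMap.id ℝ (EuclideanSpace ℝ (Fin d))))) q := by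
      have := ((hasFDerivAt_id q).inner ℝ (hasFDerivAt_id q)).const_add 1
      simpa using this
    have hinv : HasDerivAt (fun u : ℝ => u⁻¹) (-((1 + s) ^ 2)⁻¹) (1 + s) := by
      simpa using hasDerivAt_inv hDnne
    have h3 : HasFDerivAt (fun x : EuclideanSpace ℝ (Fin d) => (1 + ⟪x, x⟫ : ℝ)⁻¹)
        ((-((1 + s) ^ 2)⁻¹) • ((fderivInnerCLM ℝ (q, q)).comp
          ((ContinuousLinearMap.id ℝ (EuclideanSpace ℝ (Fin d))).prod (ContinuousLinearMap.id ℝ (EuclideanSpace ℝ (Fin d)))))) q :=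
      hinv.comp_hasFDerivAt q h2
    have h4 := hNd.mul h3
    have hfun : h = fun x : EuclideanSpace ℝ (Fin d) => ⟪x - v, x - v⟫ * (1 + ⟪x, x⟫ : ℝ)⁻¹ := by
      funext x
      rw [hh x, hnormsq (x - v), hnormsq x, div_eq_mul_inv]
    rw [hfun, hasGradientAt_iff_hasFDerivAt]
    refine h4.congr_fderiv (Eq.symm ?_)
    ext w
    simp only [InnerProductSpace.toDual_apply_apply, ContinuousLinearMap.add_apply,
      ContinuousLinearMap.coe_smul', Pi.smul_apply, ContinuousLinearMap.coe_comp',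
      Function.comp_apply, ContinuousLinearMap.prod_apply, ContinuousLinearMap.coe_id',
      id_eq, fderivInnerCLM_apply, hGh]
    simp only [smul_eq_mul]
    rw [hN, hs]
    simp only [inner_sub_left, inner_sub_right, real_inner_smul_left]
    rw [real_inner_comm v q, real_inner_comm q w, real_inner_comm v w]
    ring
  rw [hgradℓ.gradient, hgradh.gradient]
  -- compute the inner product
  have hvTq : ⟪v, T q⟫ = 0 := by rw [← hsym v q, hTv]; simp
  have hqv : ⟪q, v⟫ = c := by rw [hcdef]; exact real_inner_comm v q
  have hvv : ⟪v, v⟫ = 1 := by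
    rw [← hnormsq v, hvnorm]; norm_num
  have hNval : N = s - 2 * c + 1 := by
    rw [hN, inner_sub_left, inner_sub_right, inner_sub_right, hvv, hqv]
    have h1 : (inner ℝ v q : ℝ) = c := hcdef.symm
    have h2 : (inner ℝ q q : ℝ) = s := hs.symm
    rw [h1, h2]; ring
  have key : ⟪Gh, Gℓ⟫ = 8 * c * (A + lam * (s - 1) ^ 2) / (1 + s) ^ 2 := by
    rw [hGh, hGℓ]
    rw [inner_sub_left, inner_add_right, inner_add_right,
      real_inner_smul_left, real_inner_smul_left, real_inner_smul_left, real_inner_smul_left,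
      real_inner_smul_right, real_inner_smul_right, real_inner_smul_right, real_inner_smul_right,
      inner_sub_left, inner_sub_left, hvTq, hNval]
    have h1 : (inner ℝ v q : ℝ) = c := hcdef.symm
    have h2 : (inner ℝ q q : ℝ) = s := hs.symm
    have h3 : (inner ℝ q (T q) : ℝ) = A := hA.symm
    rw [h1, h2, h3]
    field_simp
    ring
  rw [key]
  clear_value Gh Gℓ N A c s T
  have hpow : (0:ℝ) < (1 + s) ^ 2 := by positivity
  have hX0 : 0 ≤ A + lam * (s - 1) ^ 2 := by
    have := mul_nonneg hlam.le (sq_nonneg (s - 1)); linarith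
  constructor
  · apply div_nonneg _ hpow.le
    have : 0 ≤ 8 * c := by linarith
    exact mul_nonneg this hX0
  · constructor
    · intro h0
      have hnum : 8 * c * (A + lam * (s - 1) ^ 2) = 0 :=
        (div_eq_zero_iff.mp h0).resolve_right (pow_ne_zero 2 hDnne)
      have hsum : A + lam * (s - 1) ^ 2 = 0 := by
        have h8c : (8:ℝ) * c ≠ 0 := by positivity
        exact (mul_eq_zero.mp hnum).resolve_left h8c
      have hlamterm : 0 ≤ lam * (s - 1) ^ 2 := mul_nonneg hlam.le (sq_nonneg (s - 1))
      have hA0' : A = 0 := by linarith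
      have hs1 : s = 1 := by
        have hz : lam * (s - 1) ^ 2 = 0 := by linarith
        have hz2 : (s - 1) ^ 2 = 0 := (mul_eq_zero.mp hz).resolve_left (ne_of_gt hlam)
        have := pow_eq_zero_iff (n := 2) (by norm_num) |>.mp hz2
        linarith
      have hDq : (D *ᵥ fun i => q i) = 0 := by
        apply (hD.dotProduct_mulVec_zero_iff (fun i => q i)).mp
        rw [show star (fun i => q i) = fun i => q i from star_trivial _]
        rw [← hdot q, ← hA, hA0']
      obtain ⟨t, ht⟩ := (hker q).mp hDq
      have hts : s = t ^ 2 := by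
        rw [hs, ht, real_inner_smul_left, real_inner_smul_right, hvv]
        ring
      have htc : c = t := by
        rw [hcdef, ht, real_inner_smul_right, hvv]; ring
      have hts1 : t ^ 2 = 1 := by rw [← hts, hs1]
      have htpos : 0 < t := by rw [← htc]; exact hcq
      have ht1 : t = 1 := by nlinarith [hts1, htpos]
      rw [ht, ht1, one_smul]
    · intro hqveq
      have hA' : A = 0 := by rw [hA, hqveq, hTv, inner_zero_right]
      have hs' : s = 1 := by rw [hs, hqveq, hvv]
      rw [hA', hs']
      simp
end

section
/- Let D = diag(λ₁, …, λ_d) with 0 = λ₁ < λ₂ ≤ … ≤ λ_d and let λ > 0, and define ℓ(q) = qᵀDq + λ(‖q‖² − 1)². Suppose q : [0, ∞) → ℝᵈ is differentiable and satisfies the gradient flow equation q'(t) = −∇ℓ(q(t)) for all t ≥ 0, with initial condition e₁ᵀ q(0) > 0. Then q(t) → e₁ as t → ∞. (Symmetrically, if e₁ᵀ q(0) < 0 then q(t) → −e₁.) -/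
open Filter Topology

section Aux
variable {d : ℕ}

lemma sq_fderiv {E : Type*} [NormedAddCommGroup E] [NormedSpace ℝ E]
    {f : E → ℝ} {f' : E →L[ℝ] ℝ} {x : E} (hf : HasFDerivAt f f' x) :
    HasFDerivAt (fun y => f y ^ 2) ((2 * f x) • f') x := by
  have h := hf.fun_mul hf
  have : (fun y => f y * f y) = fun y => f y ^ 2 := by funext y; ring
  rw [this] at h
  refine h.congr_fderiv ?_
  rw [two_mul, add_smul]

lemma grad_ell (Λ : Fin d → ℝ) (lam : ℝ)
    (ℓ : EuclideanSpace ℝ (Fin d) → ℝ)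
    (hℓ : ∀ q : EuclideanSpace ℝ (Fin d),
      ℓ q = ∑ i, Λ i * q i ^ 2 + lam * (‖q‖ ^ 2 - 1) ^ 2)
    (x : EuclideanSpace ℝ (Fin d)) :
    HasGradientAt ℓ (WithLp.toLp 2 (fun i => (2 * Λ i + 4 * lam * (‖x‖ ^ 2 - 1)) * x i :
      Fin d → ℝ) : EuclideanSpace ℝ (Fin d)) x := by
  have hℓ' : ℓ = fun q : EuclideanSpace ℝ (Fin d) =>
      ∑ i, Λ i * q i ^ 2 + lam * (‖q‖ ^ 2 - 1) ^ 2 := funext hℓ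
  subst hℓ'
  have h1 : HasFDerivAt (fun y : EuclideanSpace ℝ (Fin d) => ‖y‖ ^ 2)
      (2 • (innerSL ℝ x)) x := (hasStrictFDerivAt_norm_sq x).hasFDerivAt
  have h2 : HasFDerivAt (fun y : EuclideanSpace ℝ (Fin d) => lam * (‖y‖ ^ 2 - 1) ^ 2)
      (lam • ((2 * (‖x‖ ^ 2 - 1)) • (2 • (innerSL ℝ x)))) x :=
    (sq_fderiv (h1.sub_const 1)).const_mul lam
  have h3 : ∀ i : Fin d, HasFDerivAt (fun y : EuclideanSpace ℝ (Fin d) => Λ i * y i ^ 2)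
      (Λ i • ((2 * x i) • (EuclideanSpace.proj i : EuclideanSpace ℝ (Fin d) →L[ℝ] ℝ))) x :=
    fun i => (sq_fderiv ((EuclideanSpace.proj (𝕜 := ℝ) i).hasFDerivAt (x := x))).const_mul (Λ i)
  have h4 := (HasFDerivAt.fun_sum (fun i (_ : i ∈ Finset.univ) => h3 i)).fun_add h2
  rw [hasGradientAt_iff_hasFDerivAt]
  refine h4.congr_fderiv ?_
  apply ContinuousLinearMap.ext
  intro v
  simp only [InnerProductSpace.toDual_apply_apply, PiLp.inner_apply, RCLike.inner_apply,
    ContinuousLinearMap.add_apply, ContinuousLinearMap.coe_sum', Finset.sum_apply,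
    ContinuousLinearMap.coe_smul', Pi.smul_apply, PiLp.proj_apply,
    innerSL_apply_apply, smul_eq_mul, starRingEnd_apply, star_trivial]
  simp only [nsmul_eq_mul, Nat.cast_ofNat]
  simp only [Finset.mul_sum]
  rw [← Finset.sum_add_distrib]
  apply Finset.sum_congr rfl; intro i _; ring

lemma exp_lin_deriv (k x : ℝ) : HasDerivAt (fun τ => Real.exp (k * τ)) (k * Real.exp (k * x)) x := by
  have h := ((hasDerivAt_id x).const_mul k).exp
  simp only [id_eq, mul_one] at h
  simpa [mul_comm] using h

-- exponentials with negative rate tend to zero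
lemma exp_neg_rate_tendsto {μ : ℝ} (hμ : μ < 0) :
    Tendsto (fun t : ℝ => Real.exp (μ * t)) atTop (𝓝 0) := by
  apply Real.tendsto_exp_atBot.comp
  exact Tendsto.const_mul_atTop_of_neg hμ tendsto_id

end Aux

section Main

variable (d : ℕ) (hd : 0 < d) (Λ : Fin d → ℝ) (lam : ℝ)
  (ℓ : EuclideanSpace ℝ (Fin d) → ℝ) (q : ℝ → EuclideanSpace ℝ (Fin d))

/-- the main convergence lemma, assuming `q 0 i0 ≠ 0`. -/
lemma key (hΛ1 : Λ ⟨0, hd⟩ = 0)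
    (hΛpos : ∀ i : Fin d, i ≠ ⟨0, hd⟩ → 0 < Λ i)
    (hlam : 0 < lam)
    (hℓ : ∀ q : EuclideanSpace ℝ (Fin d),
      ℓ q = ∑ i, Λ i * q i ^ 2 + lam * (‖q‖ ^ 2 - 1) ^ 2)
    (hflow : ∀ t : ℝ, 0 ≤ t → HasDerivAt q (-(gradient ℓ (q t))) t)
    (hq0 : q 0 ⟨0, hd⟩ ≠ 0) :
    ∀ i : Fin d, Tendsto (fun t => q t i) atTop
      (𝓝 (if i = ⟨0, hd⟩ then q 0 ⟨0, hd⟩ / |q 0 ⟨0, hd⟩| else 0)) := by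
  set i0 : Fin d := ⟨0, hd⟩ with hi0
  set s : ℝ → ℝ := fun t => ‖q t‖ ^ 2 with hs
  set c : ℝ → ℝ := fun t => 4 * lam * (s t - 1) with hc
  -- gradient evaluated along the flow
  have hgrad : ∀ t : ℝ, gradient ℓ (q t) =
      (WithLp.toLp 2 (fun i => (2 * Λ i + 4 * lam * (‖q t‖ ^ 2 - 1)) * q t i : Fin d → ℝ) :
        EuclideanSpace ℝ (Fin d)) :=
    fun t => (grad_ell Λ lam ℓ hℓ (q t)).gradient
  -- coordinate ODE
  have hqi : ∀ i : Fin d, ∀ t : ℝ, 0 ≤ t →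
      HasDerivAt (fun t => q t i) (-((2 * Λ i + c t) * q t i)) t := by
    intro i t ht
    have h := (EuclideanSpace.proj (𝕜 := ℝ) i).hasFDerivAt.comp_hasDerivAt t (hflow t ht)
    have heq : (EuclideanSpace.proj (𝕜 := ℝ) i) (-(gradient ℓ (q t)))
        = -((2 * Λ i + c t) * q t i) := by
      rw [hgrad t]; simp [hc, hs]
    rw [heq] at h
    exact h
  -- continuity facts
  have hqcont : ∀ t : ℝ, 0 ≤ t → ContinuousAt q t := fun t ht => (hflow t ht).continuousAt
  have hccont : ∀ t : ℝ, 0 ≤ t → ContinuousAt c t := by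
    intro t ht
    exact (continuousAt_const.mul (((continuous_norm.continuousAt.comp (hqcont t ht)).pow 2).sub
      continuousAt_const))
  have hcOn : ContinuousOn c (Set.Ici 0) := fun t ht => (hccont t ht).continuousWithinAt
  have hcint : ∀ b : ℝ, 0 ≤ b → IntervalIntegrable c MeasureTheory.volume 0 b := by
    intro b hb
    apply ContinuousOn.intervalIntegrable
    apply hcOn.mono
    rw [Set.uIcc_of_le hb]
    exact Set.Icc_subset_Ici_self
  set w : ℝ → ℝ := fun t => ∫ τ in (0:ℝ)..t, c τ with hw
  have hw0 : w 0 = 0 := intervalIntegral.integral_same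
  -- derivative of w within Ici 0
  have hwd : ∀ t : ℝ, 0 ≤ t → HasDerivWithinAt w (c t) (Set.Ici 0) t := by
    intro t ht
    rcases eq_or_lt_of_le ht with rfl | ht'
    · have hmeas : StronglyMeasurableAtFilter c (𝓝[>] (0:ℝ)) MeasureTheory.volume :=
        ⟨Set.Ici 0, Filter.mem_of_superset self_mem_nhdsWithin Set.Ioi_subset_Ici_self,
          hcOn.aestronglyMeasurable measurableSet_Ici⟩
      exact intervalIntegral.integral_hasDerivWithinAt_right (hcint 0 le_rfl) hmeas
        ((hccont 0 le_rfl).continuousWithinAt)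
    · exact (intervalIntegral.integral_hasDerivAt_right (hcint t ht)
        ⟨Set.Ici 0, Ici_mem_nhds ht', hcOn.aestronglyMeasurable measurableSet_Ici⟩
        (hccont t ht)).hasDerivWithinAt
  -- the conserved quantities
  have hwc : ContinuousOn w (Set.Ici 0) := fun x hx => (hwd x hx).continuousWithinAt
  have hrep : ∀ i : Fin d, ∀ t : ℝ, 0 ≤ t →
      q t i = q 0 i * Real.exp (-(2 * Λ i * t) - w t) := by
    intro i t ht
    set F : ℝ → ℝ := fun τ => q τ i * Real.exp (2 * Λ i * τ + w τ) with hF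
    have hFd : ∀ x ∈ Set.Ico 0 t, HasDerivWithinAt F 0 (Set.Ici x) x := by
      intro x hx
      have hx0 : (0:ℝ) ≤ x := hx.1
      have h1 : HasDerivWithinAt (fun τ => 2 * Λ i * τ + w τ) (2 * Λ i + c x)
          (Set.Ici x) x := by
        have := (((hasDerivAt_id x).const_mul (2 * Λ i)).hasDerivWithinAt
          (s := Set.Ici x)).fun_add ((hwd x hx0).mono (Set.Ici_subset_Ici.mpr hx0))
        simpa using this
      have hE := h1.exp
      have hq' := (hqi i x hx0).hasDerivWithinAt (s := Set.Ici x)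
      have h2 := hq'.fun_mul hE
      refine h2.congr_deriv ?_
      ring
    have hqic : ContinuousOn (fun τ => q τ i) (Set.Ici 0) := fun x hx =>
      (((EuclideanSpace.proj (𝕜 := ℝ) i).continuous.continuousAt).comp
        (hqcont x hx)).continuousWithinAt
    have hFc : ContinuousOn F (Set.Icc 0 t) := by
      apply ContinuousOn.mul (hqic.mono Set.Icc_subset_Ici_self)
      exact (Real.continuous_exp.comp_continuousOn
        (((continuous_const.mul continuous_id).continuousOn).add
          (hwc.mono Set.Icc_subset_Ici_self)))
    have h1 : q t i * Real.exp (2 * Λ i * t + w t) = q 0 i := by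
      have h := constant_of_has_deriv_right_zero hFc hFd t ⟨ht, le_rfl⟩
      simpa [hF, hw0] using h
    rw [show -(2 * Λ i * t) - w t = -(2 * Λ i * t + w t) by ring, Real.exp_neg, ← h1]
    rw [mul_assoc, mul_inv_cancel₀ (Real.exp_ne_zero _), mul_one]
  -- the quantity z = exp(2w) and A
  set a : ℝ := (q 0 i0) ^ 2 with haa
  have ha : 0 < a := pow_two_pos_of_ne_zero hq0
  set A : ℝ → ℝ := fun t => ∑ i, (q 0 i) ^ 2 * Real.exp (-(4 * Λ i * t)) with hA
  set z : ℝ → ℝ := fun t => Real.exp (2 * w t) with hz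
  have hz0 : z 0 = 1 := by simp [hz, hw0]
  have hzd : ∀ t : ℝ, 0 ≤ t → HasDerivWithinAt z (2 * c t * z t) (Set.Ici 0) t := by
    intro t ht
    have h := ((hwd t ht).const_mul 2).exp
    convert h using 1
    ring
  have hsum : ∀ t : ℝ, s t = ∑ i, (q t i) ^ 2 := by
    intro t
    rw [hs]
    simp only [EuclideanSpace.norm_eq]
    rw [Real.sq_sqrt (by positivity)]
    apply Finset.sum_congr rfl
    intro i _
    rw [Real.norm_eq_abs, sq_abs]
  have hsz : ∀ t : ℝ, 0 ≤ t → s t * z t = A t := by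
    intro t ht
    rw [hsum, Finset.sum_mul, hA]
    apply Finset.sum_congr rfl
    intro i _
    rw [hrep i t ht, mul_pow, hz]
    rw [mul_assoc, sq (Real.exp _), ← Real.exp_add, ← Real.exp_add]
    congr 2
    ring
  set G : ℝ → ℝ := fun t => z t * Real.exp (8 * lam * t) with hG
  have hGd : ∀ t : ℝ, 0 ≤ t →
      HasDerivWithinAt G (8 * lam * A t * Real.exp (8 * lam * t)) (Set.Ici 0) t := by
    intro t ht
    have h2 : HasDerivWithinAt (fun τ : ℝ => Real.exp (8 * lam * τ))
        (8 * lam * Real.exp (8 * lam * t)) (Set.Ici 0) t :=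
      (exp_lin_deriv (8 * lam) t).hasDerivWithinAt
    have h3 := (hzd t ht).fun_mul h2
    refine h3.congr_deriv ?_
    rw [← hsz t ht]
    simp only [hc]
    ring
  have hA_ge : ∀ t : ℝ, a ≤ A t := by
    intro t
    have h := Finset.single_le_sum
      (f := fun i => (q 0 i) ^ 2 * Real.exp (-(4 * Λ i * t)))
      (fun i _ => by positivity) (Finset.mem_univ i0)
    simpa [hΛ1, haa] using h
  have hAa : ∀ t : ℝ, A t - a =
      ∑ i ∈ Finset.univ.erase i0, (q 0 i) ^ 2 * Real.exp (-(4 * Λ i * t)) := by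
    intro t
    have h := Finset.sum_erase_add Finset.univ
      (fun i => (q 0 i) ^ 2 * Real.exp (-(4 * Λ i * t))) (Finset.mem_univ i0)
    simp only [hΛ1, mul_zero, zero_mul, neg_zero, Real.exp_zero, mul_one] at h
    simp only [hA, haa]
    linarith
  -- lower bound
  have hlow : ∀ t : ℝ, 0 ≤ t → (1 - a) ≤ (z t - a) * Real.exp (8 * lam * t) := by
    intro t ht
    set L : ℝ → ℝ := fun τ => G τ - a * Real.exp (8 * lam * τ) with hL
    have hLd : ∀ x : ℝ, 0 ≤ x → HasDerivWithinAt L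
        (8 * lam * (A x - a) * Real.exp (8 * lam * x)) (Set.Ici 0) x := by
      intro x hx
      have h2 : HasDerivWithinAt (fun τ : ℝ => a * Real.exp (8 * lam * τ))
          (a * (8 * lam * Real.exp (8 * lam * x))) (Set.Ici 0) x :=
        ((exp_lin_deriv (8 * lam) x).const_mul a).hasDerivWithinAt
      have := (hGd x hx).fun_sub h2
      refine this.congr_deriv ?_
      ring
    have hmono : MonotoneOn L (Set.Ici 0) := by
      apply monotoneOn_of_hasDerivWithinAt_nonneg (convex_Ici 0)
        (fun x hx => (hLd x hx).continuousWithinAt)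
        (f' := fun x => 8 * lam * (A x - a) * Real.exp (8 * lam * x))
      · intro x hx
        rw [interior_Ici] at hx
        exact ((hLd x (le_of_lt hx)).mono (by rw [interior_Ici]; exact Set.Ioi_subset_Ici_self))
      · intro x hx
        have h4 : (0:ℝ) ≤ A x - a := by linarith [hA_ge x]
        exact mul_nonneg (mul_nonneg (by positivity) h4) (Real.exp_pos _).le
    have h := hmono (Set.self_mem_Ici) ht ht
    have hL0 : L 0 = 1 - a := by simp [hL, hG, hz0]
    have hLt : L t = (z t - a) * Real.exp (8 * lam * t) := by rw [hL, hG]; ring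
    rw [hL0, hLt] at h
    exact h
  -- upper bound
  set ν : Fin d → ℝ := fun i => max (8 * lam - 4 * Λ i) (4 * lam) with hν
  have hν_pos : ∀ i, 0 < ν i := fun i => lt_max_iff.mpr (Or.inr (by linarith))
  have hν_lt : ∀ i, i ≠ i0 → ν i < 8 * lam := by
    intro i hi
    have := hΛpos i hi
    exact max_lt (by linarith) (by linarith)
  set P : ℝ → ℝ := fun t => ∑ i ∈ Finset.univ.erase i0,
      (8 * lam * (q 0 i) ^ 2 / ν i) * Real.exp (ν i * t) with hP
  have hhigh : ∀ t : ℝ, 0 ≤ t →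
      (z t - a) * Real.exp (8 * lam * t) ≤ (1 - a) - P 0 + P t := by
    intro t ht
    set U : ℝ → ℝ := fun τ => G τ - a * Real.exp (8 * lam * τ) - P τ with hU
    have hPd : ∀ x : ℝ, HasDerivWithinAt P
        (∑ i ∈ Finset.univ.erase i0, 8 * lam * (q 0 i) ^ 2 * Real.exp (ν i * x))
        (Set.Ici 0) x := by
      intro x
      apply HasDerivWithinAt.fun_sum
      intro i hi
      have h1 : HasDerivWithinAt (fun τ : ℝ => Real.exp (ν i * τ))
          (ν i * Real.exp (ν i * x)) (Set.Ici 0) x :=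
        (exp_lin_deriv (ν i) x).hasDerivWithinAt
      have := h1.const_mul (8 * lam * (q 0 i) ^ 2 / ν i)
      refine this.congr_deriv ?_
      field_simp [(hν_pos i).ne']
    have hUd : ∀ x : ℝ, 0 ≤ x → HasDerivWithinAt U
        (8 * lam * (A x - a) * Real.exp (8 * lam * x) -
          ∑ i ∈ Finset.univ.erase i0, 8 * lam * (q 0 i) ^ 2 * Real.exp (ν i * x))
        (Set.Ici 0) x := by
      intro x hx
      have h2 : HasDerivWithinAt (fun τ : ℝ => a * Real.exp (8 * lam * τ))
          (a * (8 * lam * Real.exp (8 * lam * x))) (Set.Ici 0) x :=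
        ((exp_lin_deriv (8 * lam) x).const_mul a).hasDerivWithinAt
      have := ((hGd x hx).fun_sub h2).fun_sub (hPd x)
      refine this.congr_deriv ?_
      ring
    have hanti : AntitoneOn U (Set.Ici 0) := by
      apply antitoneOn_of_hasDerivWithinAt_nonpos (convex_Ici 0)
        (fun x hx => (hUd x hx).continuousWithinAt)
        (f' := fun x => 8 * lam * (A x - a) * Real.exp (8 * lam * x) -
          ∑ i ∈ Finset.univ.erase i0, 8 * lam * (q 0 i) ^ 2 * Real.exp (ν i * x))
      · intro x hx
        rw [interior_Ici] at hx
        exact ((hUd x (le_of_lt hx)).mono (by rw [interior_Ici]; exact Set.Ioi_subset_Ici_self))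
      · intro x hx
        rw [interior_Ici] at hx
        have hx0 : (0:ℝ) ≤ x := le_of_lt hx
        rw [sub_nonpos, hAa, Finset.mul_sum, Finset.sum_mul]
        apply Finset.sum_le_sum
        intro i hi
        have h5 : Real.exp (-(4 * Λ i * x)) * Real.exp (8 * lam * x) =
            Real.exp ((8 * lam - 4 * Λ i) * x) := by
          rw [← Real.exp_add]; congr 1; ring
        calc 8 * lam * ((q 0 i) ^ 2 * Real.exp (-(4 * Λ i * x))) * Real.exp (8 * lam * x)
            = 8 * lam * (q 0 i) ^ 2 *
              (Real.exp (-(4 * Λ i * x)) * Real.exp (8 * lam * x)) := by ring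
          _ = 8 * lam * (q 0 i) ^ 2 * Real.exp ((8 * lam - 4 * Λ i) * x) := by rw [h5]
          _ ≤ 8 * lam * (q 0 i) ^ 2 * Real.exp (ν i * x) := by
              apply mul_le_mul_of_nonneg_left _ (by positivity)
              apply Real.exp_le_exp.mpr
              exact mul_le_mul_of_nonneg_right (le_max_left _ _) hx0
    have h := hanti (Set.self_mem_Ici) ht ht
    have hU0 : U 0 = 1 - a - P 0 := by simp [hU, hG, hz0]
    have hUt : U t = (z t - a) * Real.exp (8 * lam * t) - P t := by rw [hU, hG]; ring
    rw [hU0, hUt] at h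
    linarith
  -- limit of z
  have hz_lim : Tendsto z atTop (𝓝 a) := by
    have hdiff : Tendsto (fun t => z t - a) atTop (𝓝 0) := by
      apply tendsto_of_tendsto_of_tendsto_of_le_of_le'
        (g := fun t => (1 - a) * Real.exp ((-(8 * lam)) * t))
        (h := fun t => ((1 - a) - P 0) * Real.exp ((-(8 * lam)) * t) +
          ∑ i ∈ Finset.univ.erase i0,
            (8 * lam * (q 0 i) ^ 2 / ν i) * Real.exp ((ν i - 8 * lam) * t))
      · have := (exp_neg_rate_tendsto (by linarith : -(8 * lam) < 0)).const_mul (1 - a)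
        simpa using this
      · have h1 := (exp_neg_rate_tendsto (by linarith : -(8 * lam) < 0)).const_mul ((1 - a) - P 0)
        have h2 : Tendsto (fun t => ∑ i ∈ Finset.univ.erase i0,
            (8 * lam * (q 0 i) ^ 2 / ν i) * Real.exp ((ν i - 8 * lam) * t)) atTop
            (𝓝 (∑ i ∈ Finset.univ.erase i0, (0:ℝ))) := by
          apply tendsto_finset_sum
          intro i hi
          have hneg : ν i - 8 * lam < 0 := by
            have := hν_lt i (Finset.ne_of_mem_erase hi)
            linarith
          have := (exp_neg_rate_tendsto hneg).const_mul (8 * lam * (q 0 i) ^ 2 / ν i)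
          simpa using this
        have := h1.add h2
        simpa using this
      · filter_upwards [eventually_ge_atTop (0:ℝ)] with t ht
        have h := hlow t ht
        have hE : (0:ℝ) < Real.exp (8 * lam * t) := Real.exp_pos _
        have h2 := mul_le_mul_of_nonneg_right h (Real.exp_pos ((-(8 * lam)) * t)).le
        have h3 : Real.exp (8 * lam * t) * Real.exp ((-(8 * lam)) * t) = 1 := by
          rw [← Real.exp_add]; norm_num
        rw [mul_assoc, h3, mul_one] at h2
        exact h2
      · filter_upwards [eventually_ge_atTop (0:ℝ)] with t ht
        have h := hhigh t ht
        have h2 := mul_le_mul_of_nonneg_right h (Real.exp_pos ((-(8 * lam)) * t)).le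
        have h3 : Real.exp (8 * lam * t) * Real.exp ((-(8 * lam)) * t) = 1 := by
          rw [← Real.exp_add]; norm_num
        rw [mul_assoc, h3, mul_one] at h2
        refine le_trans h2 ?_
        rw [add_mul, hP, Finset.sum_mul]
        apply add_le_add
        · apply le_of_eq; ring
        · apply le_of_eq
          apply Finset.sum_congr rfl
          intro i hi
          rw [mul_assoc, ← Real.exp_add]
          congr 2
          ring
    have := hdiff.add_const a
    simpa using this
  -- conclude coordinatewise
  have hsq : ∀ t : ℝ, Real.sqrt (z t) = Real.exp (w t) := by
    intro t
    simp only [hz]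
    rw [two_mul, Real.exp_add, Real.sqrt_mul_self (Real.exp_pos _).le]
  have hsqa : Real.sqrt a = |q 0 i0| := by rw [haa, Real.sqrt_sq_eq_abs]
  have h_inv : Tendsto (fun t => (Real.sqrt (z t))⁻¹) atTop (𝓝 ((Real.sqrt a)⁻¹)) := by
    apply Tendsto.inv₀
    · exact (Real.continuous_sqrt.tendsto a).comp hz_lim
    · positivity
  intro i
  by_cases hi : i = i0
  · rw [if_pos hi]
    have hev : ∀ᶠ t in atTop, q 0 i0 * ((Real.sqrt (z t))⁻¹) = q t i := by
      filter_upwards [eventually_ge_atTop (0:ℝ)] with t ht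
      rw [hrep i t ht, hi, hsq, ← Real.exp_neg, hΛ1]
      norm_num
    have hlim := (tendsto_const_nhds (x := q 0 i0)).mul h_inv
    have heq : q 0 i0 * (Real.sqrt a)⁻¹ = q 0 i0 / |q 0 i0| := by
      rw [hsqa, div_eq_mul_inv]
    rw [heq] at hlim
    exact hlim.congr' hev
  · rw [if_neg hi]
    have hev : ∀ᶠ t in atTop,
        (q 0 i * Real.exp ((-(2 * Λ i)) * t)) * ((Real.sqrt (z t))⁻¹) = q t i := by
      filter_upwards [eventually_ge_atTop (0:ℝ)] with t ht
      rw [hrep i t ht, hsq, ← Real.exp_neg, mul_assoc, ← Real.exp_add]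
      congr 1
      congr 1
      ring
    have h1 : Tendsto (fun t => q 0 i * Real.exp ((-(2 * Λ i)) * t)) atTop (𝓝 0) := by
      have := (exp_neg_rate_tendsto (by have := hΛpos i hi; linarith : -(2 * Λ i) < 0)).const_mul (q 0 i)
      simpa using this
    have hlim := h1.mul h_inv
    rw [zero_mul] at hlim
    exact hlim.congr' hev

end Main

/-- For `D = diag(λ₁,…,λ_d)` with `0 = λ₁ < λ₂ ≤ … ≤ λ_d` and `λ > 0`,
any differentiable solution of the gradient flow `q'(t) = −∇ℓ(q(t))` on `[0,∞)` with
`e₁ᵀq(0) > 0` converges to `e₁` as `t → ∞` (and symmetrically, to `−e₁` if `e₁ᵀq(0) < 0`). -/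
theorem stmt17 (d : ℕ) (hd : 0 < d) (Λ : Fin d → ℝ)
    (hΛmono : Monotone Λ) (hΛ1 : Λ ⟨0, hd⟩ = 0)
    (hΛpos : ∀ i : Fin d, i ≠ ⟨0, hd⟩ → 0 < Λ i)
    (lam : ℝ) (hlam : 0 < lam)
    (ℓ : EuclideanSpace ℝ (Fin d) → ℝ)
    (hℓ : ∀ q : EuclideanSpace ℝ (Fin d),
      ℓ q = ∑ i, Λ i * q i ^ 2 + lam * (‖q‖ ^ 2 - 1) ^ 2)
    (q : ℝ → EuclideanSpace ℝ (Fin d))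
    (hflow : ∀ t : ℝ, 0 ≤ t → HasDerivAt q (-(gradient ℓ (q t))) t) :
    (0 < q 0 ⟨0, hd⟩ →
      Tendsto q atTop (𝓝 (EuclideanSpace.single (⟨0, hd⟩ : Fin d) (1 : ℝ)))) ∧
    (q 0 ⟨0, hd⟩ < 0 →
      Tendsto q atTop (𝓝 (-(EuclideanSpace.single (⟨0, hd⟩ : Fin d) (1 : ℝ))))) := by
  have hassemble : ∀ v : EuclideanSpace ℝ (Fin d),
      (∀ i : Fin d, Tendsto (fun t => q t i) atTop (𝓝 (v i))) →
      Tendsto q atTop (𝓝 v) := by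
    intro v hv
    have he := (PiLp.continuousLinearEquiv 2 ℝ (fun _ : Fin d => ℝ)).toHomeomorph.isEmbedding
    rw [he.tendsto_nhds_iff]
    rw [tendsto_pi_nhds]
    exact hv
  constructor
  · intro hpos
    have hk := key d hd Λ lam ℓ q hΛ1 hΛpos hlam hℓ hflow (ne_of_gt hpos)
    apply hassemble
    intro i
    have h := hk i
    convert h using 2
    rw [EuclideanSpace.single_apply]
    by_cases hi : i = ⟨0, hd⟩
    · rw [if_pos hi, if_pos hi, abs_of_pos hpos, div_self (ne_of_gt hpos)]
    · rw [if_neg hi, if_neg hi]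
  · intro hneg
    have hk := key d hd Λ lam ℓ q hΛ1 hΛpos hlam hℓ hflow (ne_of_lt hneg)
    apply hassemble
    intro i
    have h := hk i
    convert h using 2
    rw [PiLp.neg_apply, EuclideanSpace.single_apply]
    by_cases hi : i = ⟨0, hd⟩
    · rw [if_pos hi, if_pos hi, abs_of_neg hneg]
      rw [div_neg, div_self (ne_of_lt hneg)]
    · rw [if_neg hi, if_neg hi, neg_zero]
end
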